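/- For any formula A of the bimodal language L_pf, the following are equivalent: (1) A is a theorem of PF; (2) A is valid on all PF-frames; (3) A is valid on all finite rooted nice PBA PF-frames; (4) for every Kripke model based on a finite rooted nice PBA PF-frame, A is true at every ≼-root element of the ⊏-root cluster. -/

import Mathlib

namespace PFPaper

/-- Formulas of the bimodal language `L_pf`, with propositional variables indexed by `ℕ`,
connectives `¬, ∧, ∨, →` and two modal operators `□p` (`boxp`) and `□f` (`boxf`). -/
inductive Formula : Type
  | var : ℕ → Formula
  | neg : Formula → Formula
  | and : Formula → Formula → Formula
  | or : Formula → Formula → Formula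
  | imp : Formula → Formula → Formula
  | boxp : Formula → Formula
  | boxf : Formula → Formula
  deriving DecidableEq

/-- `◇p A := ¬□p¬A`. -/
def diap (A : Formula) : Formula := .neg (.boxp (.neg A))

/-- `◇f A := ¬□f¬A`. -/
def diaf (A : Formula) : Formula := .neg (.boxf (.neg A))

/-- `A ↔ B` as an abbreviation: `(A → B) ∧ (B → A)`. -/
def iffF (A B : Formula) : Formula := .and (.imp A B) (.imp B A)

/-- `A` is a propositional tautology of `L_pf`: every Boolean assignment that treats
variables and boxed formulas as atoms and respects the connectives makes `A` true. -/
def Taut (A : Formula) : Prop :=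
  ∀ f : Formula → Bool,
    (∀ B, f (.neg B) = !(f B)) →
    (∀ B C, f (.and B C) = (f B && f C)) →
    (∀ B C, f (.or B C) = (f B || f C)) →
    (∀ B C, f (.imp B C) = (!(f B) || f C)) →
    f A = true

/-- The bimodal logic `PF`. -/
inductive PF : Formula → Prop
  | taut {A} : Taut A → PF A
  | kp (A B) : PF (.imp (.boxp (.imp A B)) (.imp (.boxp A) (.boxp B)))
  | lob (A) : PF (.imp (.boxp (.imp (.boxp A) A)) (.boxp A))
  | kf (A B) : PF (.imp (.boxf (.imp A B)) (.imp (.boxf A) (.boxf B)))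
  | tf (A) : PF (.imp (.boxf A) A)
  | fourf (A) : PF (.imp (.boxf A) (.boxf (.boxf A)))
  | dot2f (A) : PF (.imp (diaf (.boxf A)) (.boxf (diaf A)))
  | pf1 (A) : PF (.imp (.boxp A) (.boxf (.boxp A)))
  | pf2 (A) : PF (.imp (diap A) (.boxf (diap A)))
  | pf3 (A) : PF (.imp (.boxp A) (.boxp (.boxf A)))
  | mp {A B} : PF (.imp A B) → PF A → PF B
  | necp {A} : PF A → PF (.boxp A)
  | necf {A} : PF A → PF (.boxf A)

/-- The logic `PF^ω`: axioms are all theorems of `PF` together with all formulas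
`□p A → □f A`; the sole rule is modus ponens. -/
inductive PFomega : Formula → Prop
  | ofPF {A} : PF A → PFomega A
  | reflAx (A) : PFomega (.imp (.boxp A) (.boxf A))
  | mp {A B} : PFomega (.imp A B) → PFomega A → PFomega B

section Semantics

variable {W : Type}

/-- Kripke satisfaction on a frame `(W, R, S)` (`R` = `⊏` interprets `□p`,
`S` = `≼` interprets `□f`) with valuation `V`. -/
def Sat (R S : W → W → Prop) (V : W → ℕ → Prop) : W → Formula → Prop
  | w, .var n => V w n
  | w, .neg A => ¬ Sat R S V w A
  | w, .and A B => Sat R S V w A ∧ Sat R S V w B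
  | w, .or A B => Sat R S V w A ∨ Sat R S V w B
  | w, .imp A B => Sat R S V w A → Sat R S V w B
  | w, .boxp A => ∀ v, R w v → Sat R S V v A
  | w, .boxf A => ∀ v, S w v → Sat R S V v A

/-- `A` is valid on the frame `(W, R, S)`. -/
def ValidOn (R S : W → W → Prop) (A : Formula) : Prop :=
  ∀ (V : W → ℕ → Prop) (w : W), Sat R S V w A

/-- `(W, R, S)` is a `PF`-frame: all theorems of `PF` are valid on it. -/
def IsPFFrame (R S : W → W → Prop) : Prop :=
  ∀ A : Formula, PF A → ValidOn R S A

/-- The symmetric closure `∼` of `≼`. -/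
def SymCl (S : W → W → Prop) (x y : W) : Prop := S x y ∨ S y x

/-- `∼⁺`: the transitive closure of the symmetric closure of `≼`. -/
def EqCl (S : W → W → Prop) : W → W → Prop := Relation.TransGen (SymCl S)

/-- The cluster of `x`: its `∼⁺`-equivalence class. -/
def cluster (S : W → W → Prop) (x : W) : Set W := {y | EqCl S x y}

/-- A frame is nice iff `x ⊏ z` and `y ≼ z` imply `x ⊏ y`. -/
def Nice (R S : W → W → Prop) : Prop := ∀ x y z : W, R x z → S y z → R x y

/-- A nice `PF`-frame is rooted iff there is a `⊏`-root cluster and every cluster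
has a `≼`-root element. -/
def Rooted (R S : W → W → Prop) : Prop :=
  (∃ r : W, ∀ x : W, cluster S r = cluster S x ∨ R r x) ∧
  (∀ x : W, ∃ y ∈ cluster S x, ∀ z ∈ cluster S x, S y z)

/-- The cluster of `x`, preordered by `≼`, is a pre-Boolean algebra: its quotient by
`x ≈ y ↔ (x ≼ y ∧ y ≼ x)` forms a Boolean algebra, i.e. there is a Boolean algebra `B`
and a surjection `f` from the cluster onto `B` with `a ≼ b ↔ f a ≤ f b`. -/
def ClusterPBA (S : W → W → Prop) (x : W) : Prop :=
  ∃ (B : Type) (inst : BooleanAlgebra B) (f : cluster S x → B),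
    Function.Surjective f ∧ ∀ a b : cluster S x, S a.1 b.1 ↔ inst.le (f a) (f b)

end Semantics

/-- The list of subformulas of a formula. -/
def subf : Formula → List Formula
  | .var n => [.var n]
  | .neg A => .neg A :: subf A
  | .and A B => .and A B :: (subf A ++ subf B)
  | .or A B => .or A B :: (subf A ++ subf B)
  | .imp A B => .imp A B :: (subf A ++ subf B)
  | .boxp A => .boxp A :: subf A
  | .boxf A => .boxf A :: subf A

/-- `Φ(A) = { □p B → □f B : □p B ∈ Sub(A) }`. -/
def Phi (A : Formula) : List Formula :=
  (subf A).filterMap fun B =>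
    match B with
    | .boxp C => some (.imp (.boxp C) (.boxf C))
    | _ => none

/-- Conjunction of a finite list of formulas (a fixed tautology if the list is empty). -/
def conjList : List Formula → Formula
  | [] => .imp (.var 0) (.var 0)
  | [B] => B
  | B :: C :: t => .and B (conjList (C :: t))

/-- An injective, effective coding of formulas by natural numbers. -/
def encodeF : Formula → ℕ
  | .var n => Nat.pair 0 n
  | .neg A => Nat.pair 1 (encodeF A)
  | .and A B => Nat.pair 2 (Nat.pair (encodeF A) (encodeF B))
  | .or A B => Nat.pair 3 (Nat.pair (encodeF A) (encodeF B))
  | .imp A B => Nat.pair 4 (Nat.pair (encodeF A) (encodeF B))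
  | .boxp A => Nat.pair 5 (encodeF A)
  | .boxf A => Nat.pair 6 (encodeF A)

/-- Formulas of the unimodal language `L_p` (only `□p`, written `box`). -/
inductive LpForm : Type
  | var : ℕ → LpForm
  | neg : LpForm → LpForm
  | and : LpForm → LpForm → LpForm
  | or : LpForm → LpForm → LpForm
  | imp : LpForm → LpForm → LpForm
  | box : LpForm → LpForm
  deriving DecidableEq

/-- Propositional tautologies of `L_p`. -/
def TautLp (A : LpForm) : Prop :=
  ∀ f : LpForm → Bool,
    (∀ B, f (.neg B) = !(f B)) →
    (∀ B C, f (.and B C) = (f B && f C)) →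
    (∀ B C, f (.or B C) = (f B || f C)) →
    (∀ B C, f (.imp B C) = (!(f B) || f C)) →
    f A = true

/-- The provability logic `GL` in the language `L_p`. -/
inductive GLLogic : LpForm → Prop
  | taut {A} : TautLp A → GLLogic A
  | k (A B) : GLLogic (.imp (.box (.imp A B)) (.imp (.box A) (.box B)))
  | lob (A) : GLLogic (.imp (.box (.imp (.box A) A)) (.box A))
  | mp {A B} : GLLogic (.imp A B) → GLLogic A → GLLogic B
  | nec {A} : GLLogic A → GLLogic (.box A)

/-- Solovay's logic `S`: axioms are all theorems of `GL` and all `□p A → A`;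
the sole rule is modus ponens. -/
inductive SLogic : LpForm → Prop
  | ofGL {A} : GLLogic A → SLogic A
  | reflAx (A) : SLogic (.imp (.box A) A)
  | mp {A B} : SLogic (.imp A B) → SLogic A → SLogic B

/-- Embedding of `L_p` into `L_pf` (`box ↦ □p`). -/
def LpForm.toFormula : LpForm → Formula
  | .var n => .var n
  | .neg A => .neg A.toFormula
  | .and A B => .and A.toFormula B.toFormula
  | .or A B => .or A.toFormula B.toFormula
  | .imp A B => .imp A.toFormula B.toFormula
  | .box A => .boxp A.toFormula

/-- The fusion `GL⊗Triv` in the language `L_pf`: the `GL`-axioms for `□p`,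
the axiom `A ↔ □f A`, with modus ponens and necessitation for `□p`. -/
inductive GLTriv : Formula → Prop
  | taut {A} : Taut A → GLTriv A
  | kp (A B) : GLTriv (.imp (.boxp (.imp A B)) (.imp (.boxp A) (.boxp B)))
  | lob (A) : GLTriv (.imp (.boxp (.imp (.boxp A) A)) (.boxp A))
  | triv (A) : GLTriv (iffF A (.boxf A))
  | mp {A B} : GLTriv (.imp A B) → GLTriv A → GLTriv B
  | necp {A} : GLTriv A → GLTriv (.boxp A)

/-- Formulas of the unimodal language `L_f` (only `□f`, written `box`). -/
inductive LfForm : Type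
  | var : ℕ → LfForm
  | neg : LfForm → LfForm
  | and : LfForm → LfForm → LfForm
  | or : LfForm → LfForm → LfForm
  | imp : LfForm → LfForm → LfForm
  | box : LfForm → LfForm
  deriving DecidableEq

/-- `◇f A := ¬□f¬A` in `L_f`. -/
def LfForm.dia (A : LfForm) : LfForm := .neg (.box (.neg A))

/-- Propositional tautologies of `L_f`. -/
def TautLf (A : LfForm) : Prop :=
  ∀ f : LfForm → Bool,
    (∀ B, f (.neg B) = !(f B)) →
    (∀ B C, f (.and B C) = (f B && f C)) →
    (∀ B C, f (.or B C) = (f B || f C)) →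
    (∀ B C, f (.imp B C) = (!(f B) || f C)) →
    f A = true

/-- The modal logic `S4.2` in the language `L_f`. -/
inductive S42 : LfForm → Prop
  | taut {A} : TautLf A → S42 A
  | k (A B) : S42 (.imp (.box (.imp A B)) (.imp (.box A) (.box B)))
  | t (A) : S42 (.imp (.box A) A)
  | four (A) : S42 (.imp (.box A) (.box (.box A)))
  | dot2 (A) : S42 (.imp (LfForm.dia (.box A)) (.box (LfForm.dia A)))
  | mp {A B} : S42 (.imp A B) → S42 A → S42 B
  | nec {A} : S42 A → S42 (.box A)

/-- Embedding of `L_f` into `L_pf` (`box ↦ □f`). -/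
def LfForm.toFormula : LfForm → Formula
  | .var n => .var n
  | .neg A => .neg A.toFormula
  | .and A B => .and A.toFormula B.toFormula
  | .or A B => .or A.toFormula B.toFormula
  | .imp A B => .imp A.toFormula B.toFormula
  | .box A => .boxf A.toFormula

/-- `L_pf`-formulas with no occurrence of `□p`, i.e. `L_f`-formulas. -/
inductive NoBoxp : Formula → Prop
  | var (n) : NoBoxp (.var n)
  | neg {A} : NoBoxp A → NoBoxp (.neg A)
  | and {A B} : NoBoxp A → NoBoxp B → NoBoxp (.and A B)
  | or {A B} : NoBoxp A → NoBoxp B → NoBoxp (.or A B)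
  | imp {A B} : NoBoxp A → NoBoxp B → NoBoxp (.imp A B)
  | boxf {A} : NoBoxp A → NoBoxp (.boxf A)

/-- Clauses of `□p`-CNF: disjunctions `□p D_0 ∨ ⋯ ∨ □p D_{k-1} ∨ ◇p E ∨ F`
with `F` an `L_f`-formula (each of the three parts may be absent). -/
inductive IsClause : Formula → Prop
  | lf {F} : NoBoxp F → IsClause F
  | dia (E : Formula) : IsClause (diap E)
  | diaOr (E : Formula) {F} : NoBoxp F → IsClause (.or (diap E) F)
  | boxAlone (D : Formula) : IsClause (.boxp D)
  | boxOr (D : Formula) {C} : IsClause C → IsClause (.or (.boxp D) C)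

/-- A formula in `□p`-conjunctive normal form: a conjunction of clauses. -/
inductive IsCNF : Formula → Prop
  | clause {C} : IsClause C → IsCNF C
  | and {A B} : IsCNF A → IsCNF B → IsCNF (.and A B)

/-- The `□p`-modal degree of a formula. -/
def deg : Formula → ℕ
  | .var _ => 0
  | .neg A => deg A
  | .and A B => max (deg A) (deg B)
  | .or A B => max (deg A) (deg B)
  | .imp A B => max (deg A) (deg B)
  | .boxf A => deg A
  | .boxp A => deg A + 1


/-! ### Propositional and modal toolkit for PF -/

def Bot : Formula := .neg (.imp (.var 0) (.var 0))

lemma tautK (A B : Formula) : PF (.imp A (.imp B A)) := by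
  apply PF.taut; intro f hn ha ho hi
  rw [hi, hi]; cases f A <;> cases f B <;> rfl

lemma tautS (A B C : Formula) :
    PF (.imp (.imp A (.imp B C)) (.imp (.imp A B) (.imp A C))) := by
  apply PF.taut; intro f hn ha ho hi
  simp only [hi]; cases f A <;> cases f B <;> cases f C <;> rfl

lemma pfImpSelf (A : Formula) : PF (.imp A A) := by
  apply PF.taut; intro f hn ha ho hi
  rw [hi]; cases f A <;> rfl

lemma pfMp2 {A B C : Formula} (h : PF (.imp A (.imp B C))) (h1 : PF A) (h2 : PF B) : PF C :=
  PF.mp (PF.mp h h1) h2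

lemma pfImpTrans {A B C : Formula} (h1 : PF (.imp A B)) (h2 : PF (.imp B C)) :
    PF (.imp A C) := by
  have t : PF (.imp (.imp A B) (.imp (.imp B C) (.imp A C))) := by
    apply PF.taut; intro f hn ha ho hi
    simp only [hi]; cases f A <;> cases f B <;> cases f C <;> rfl
  exact pfMp2 t h1 h2

/-- `(P→(Q→R)) → ((C→P)→((C→Q)→(C→R)))`. -/
lemma pfDist2 (C P Q R : Formula) :
    PF (.imp (.imp P (.imp Q R))
      (.imp (.imp C P) (.imp (.imp C Q) (.imp C R)))) := by
  apply PF.taut; intro f hn ha ho hi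
  simp only [hi]; cases f C <;> cases f P <;> cases f Q <;> cases f R <;> rfl

/-- rule: from `⊢ u → u'` infer `⊢ (C→u) → (C→u')`. -/
lemma pfImpDistL {u u' : Formula} (C : Formula) (h : PF (.imp u u')) :
    PF (.imp (.imp C u) (.imp C u')) := by
  have t : PF (.imp (.imp u u') (.imp (.imp C u) (.imp C u'))) := by
    apply PF.taut; intro f hn ha ho hi
    simp only [hi]; cases f C <;> cases f u <;> cases f u' <;> rfl
  exact PF.mp t h

/-- `(x→(y→u)) → (y→(x→u))`. -/
lemma pfSwap (x y u : Formula) :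
    PF (.imp (.imp x (.imp y u)) (.imp y (.imp x u))) := by
  apply PF.taut; intro f hn ha ho hi
  simp only [hi]; cases f x <;> cases f y <;> cases f u <;> rfl

/-- from `⊢ X→(Y→Z)` and `⊢ Z→Z'` infer `⊢ X→(Y→Z')`. -/
lemma pfCompInner {X Y Z Z' : Formula} (h1 : PF (.imp X (.imp Y Z)))
    (h2 : PF (.imp Z Z')) : PF (.imp X (.imp Y Z')) := by
  have t : PF (.imp (.imp X (.imp Y Z)) (.imp (.imp Z Z') (.imp X (.imp Y Z')))) := by
    apply PF.taut; intro f hn ha ho hi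
    simp only [hi]; cases f X <;> cases f Y <;> cases f Z <;> cases f Z' <;> rfl
  exact pfMp2 t h1 h2

lemma pfAnd1 (A B : Formula) : PF (.imp (.and A B) A) := by
  apply PF.taut; intro f hn ha ho hi
  simp only [hi, ha]; cases f A <;> cases f B <;> rfl

lemma pfAnd2 (A B : Formula) : PF (.imp (.and A B) B) := by
  apply PF.taut; intro f hn ha ho hi
  simp only [hi, ha]; cases f A <;> cases f B <;> rfl

lemma pfAndIntro (A B : Formula) : PF (.imp A (.imp B (.and A B))) := by
  apply PF.taut; intro f hn ha ho hi
  simp only [hi, ha]; cases f A <;> cases f B <;> rfl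

lemma pfNegE (B : Formula) : PF (.imp B (.imp (.neg B) Bot)) := by
  apply PF.taut; intro f hn ha ho hi
  simp only [Bot, hi, hn]; cases f B <;> cases f (Formula.var 0) <;> rfl

lemma pfBotE (B : Formula) : PF (.imp Bot B) := by
  apply PF.taut; intro f hn ha ho hi
  simp only [Bot, hi, hn]; cases f B <;> cases f (Formula.var 0) <;> rfl

lemma pfNegImp (B C : Formula) : PF (.imp (.neg B) (.imp B C)) := by
  apply PF.taut; intro f hn ha ho hi
  simp only [hi, hn]; cases f B <;> cases f C <;> rfl

/-- `(B→⊥) → ((¬B→⊥) → ⊥)`. -/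
lemma pfCases (B : Formula) :
    PF (.imp (.imp B Bot) (.imp (.imp (.neg B) Bot) Bot)) := by
  apply PF.taut; intro f hn ha ho hi
  simp only [Bot, hi, hn]; cases f B <;> cases f (Formula.var 0) <;> rfl

/-- `(¬B→⊥) → B`. -/
lemma pfDNE (B : Formula) : PF (.imp (.imp (.neg B) Bot) B) := by
  apply PF.taut; intro f hn ha ho hi
  simp only [Bot, hi, hn]; cases f B <;> cases f (Formula.var 0) <;> rfl

lemma regf {A B : Formula} (h : PF (.imp A B)) : PF (.imp (.boxf A) (.boxf B)) :=
  PF.mp (PF.kf A B) (PF.necf h)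

lemma regp {A B : Formula} (h : PF (.imp A B)) : PF (.imp (.boxp A) (.boxp B)) :=
  PF.mp (PF.kp A B) (PF.necp h)

/-- `□pA ∧ □pB → □p(A∧B)` in rule-friendly form: `⊢ □pA → (□pB → □p(A∧B))`. -/
lemma pfBoxpAnd (A B : Formula) :
    PF (.imp (.boxp A) (.imp (.boxp B) (.boxp (.and A B)))) := by
  have h1 : PF (.imp (.boxp A) (.boxp (.imp B (.and A B)))) := regp (pfAndIntro A B)
  exact pfImpTrans h1 (PF.kp B (.and A B))

/-- `(P→Q) → (R → (P → R∧Q))`. -/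
lemma pfAndGlue (P Q R : Formula) :
    PF (.imp (.imp P Q) (.imp R (.imp P (.and R Q)))) := by
  apply PF.taut; intro f hn ha ho hi
  simp only [hi, ha]; cases f P <;> cases f Q <;> cases f R <;> rfl

/-- derived `4` for `□p` (from Löb). -/
lemma pfFourp (A : Formula) : PF (.imp (.boxp A) (.boxp (.boxp A))) := by
  set X : Formula := .and A (.boxp A) with hX
  have h2 : PF (.imp (.boxp X) (.boxp A)) := regp (pfAnd1 A (.boxp A))
  have h3 : PF (.imp A (.imp (.boxp X) X)) :=
    PF.mp (pfAndGlue (.boxp X) (.boxp A) A) h2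
  have h4 : PF (.imp (.boxp A) (.boxp (.imp (.boxp X) X))) := regp h3
  have h5 : PF (.imp (.boxp A) (.boxp X)) := pfImpTrans h4 (PF.lob X)
  exact pfImpTrans h5 (regp (pfAnd2 A (.boxp A)))

/-! ### impList machinery -/

def impList (L : List Formula) (B : Formula) : Formula := L.foldr .imp B

@[simp] lemma impList_nil (B : Formula) : impList [] B = B := rfl
@[simp] lemma impList_cons (C : Formula) (L : List Formula) (B : Formula) :
    impList (C :: L) B = .imp C (impList L B) := rfl

lemma impList_append (L L' : List Formula) (B : Formula) :
    impList (L ++ L') B = impList L (impList L' B) := by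
  simp [impList, List.foldr_append]

lemma impListMono {X Y : Formula} (h : PF (.imp X Y)) (L : List Formula) :
    PF (.imp (impList L X) (impList L Y)) := by
  induction L with
  | nil => exact h
  | cons C L ih => exact pfImpDistL C ih

/-- `⊢ X → impList L X`. -/
lemma impListIntro (X : Formula) (L : List Formula) : PF (.imp X (impList L X)) := by
  induction L with
  | nil => exact pfImpSelf X
  | cons C L ih => exact pfImpTrans ih (tautK (impList L X) C)

lemma impListAppendRight (L L' : List Formula) (X : Formula) :
    PF (.imp (impList L X) (impList (L ++ L') X)) := by
  induction L with
  | nil => exact impListIntro X L'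
  | cons C L ih => exact pfImpDistL C ih

lemma impListAppendLeft (L L' : List Formula) (X : Formula) :
    PF (.imp (impList L' X) (impList (L ++ L') X)) := by
  induction L with
  | nil => exact pfImpSelf _
  | cons C L ih => exact pfImpTrans ih (tautK (impList (L ++ L') X) C)

/-- implication form of modus ponens under a list of antecedents. -/
lemma impListMpThm (L : List Formula) (A B : Formula) :
    PF (.imp (impList L (.imp A B)) (.imp (impList L A) (impList L B))) := by
  induction L with
  | nil => exact pfImpSelf _
  | cons C L ih =>
    exact PF.mp (pfDist2 C (impList L (.imp A B)) (impList L A) (impList L B)) ih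

lemma impListPerm {L L' : List Formula} (h : L.Perm L') (X : Formula) :
    PF (.imp (impList L X) (impList L' X)) := by
  induction h with
  | nil => exact pfImpSelf _
  | cons x _ ih => exact pfImpDistL x ih
  | swap x y L => exact pfSwap y x (impList L X)
  | trans _ _ ih1 ih2 => exact pfImpTrans ih1 ih2

lemma boxfImpList (L : List Formula) (B : Formula) :
    PF (.imp (.boxf (impList L B)) (impList (L.map .boxf) (.boxf B))) := by
  induction L with
  | nil => exact pfImpSelf _
  | cons C L ih =>
    have h1 : PF (.imp (.boxf (impList (C :: L) B))
        (.imp (.boxf C) (.boxf (impList L B)))) := PF.kf C (impList L B)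
    exact pfCompInner h1 ih

lemma boxpImpList (L : List Formula) (B : Formula) :
    PF (.imp (.boxp (impList L B)) (impList (L.map .boxp) (.boxp B))) := by
  induction L with
  | nil => exact pfImpSelf _
  | cons C L ih =>
    have h1 : PF (.imp (.boxp (impList (C :: L) B))
        (.imp (.boxp C) (.boxp (impList L B)))) := PF.kp C (impList L B)
    exact pfCompInner h1 ih

/-! ### Deduction from hypotheses, consistency, maximal consistent sets -/

inductive Ded (Γ : Set Formula) : Formula → Prop
  | ax {B} : B ∈ Γ → Ded Γ B
  | pf {B} : PF B → Ded Γ B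
  | mp {A B} : Ded Γ (.imp A B) → Ded Γ A → Ded Γ B

lemma Ded.mono {Γ Δ : Set Formula} (h : Γ ⊆ Δ) {B} (hd : Ded Γ B) : Ded Δ B := by
  induction hd with
  | ax hB => exact Ded.ax (h hB)
  | pf hB => exact Ded.pf hB
  | mp _ _ ih1 ih2 => exact Ded.mp ih1 ih2

lemma deduction {Γ : Set Formula} {A B : Formula} (h : Ded (insert A Γ) B) :
    Ded Γ (.imp A B) := by
  induction h with
  | @ax B hB =>
    rcases hB with h | h
    · subst h; exact Ded.pf (pfImpSelf _)
    · exact Ded.mp (Ded.pf (tautK B A)) (Ded.ax h)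
  | @pf B hB => exact Ded.mp (Ded.pf (tautK B A)) (Ded.pf hB)
  | @mp P Q _ _ ih1 ih2 => exact Ded.mp (Ded.mp (Ded.pf (tautS A P Q)) ih1) ih2

lemma Ded.toImpList {Γ : Set Formula} {B : Formula} (h : Ded Γ B) :
    ∃ L : List Formula, (∀ C ∈ L, C ∈ Γ) ∧ PF (impList L B) := by
  induction h with
  | @ax B hB => exact ⟨[B], by simpa using hB, pfImpSelf B⟩
  | @pf B hB => exact ⟨[], by simp, hB⟩
  | @mp P Q _ _ ih1 ih2 =>
    obtain ⟨L1, hL1, hp1⟩ := ih1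
    obtain ⟨L2, hL2, hp2⟩ := ih2
    refine ⟨L1 ++ L2, ?_, ?_⟩
    · intro C hC; rcases List.mem_append.1 hC with h | h
      · exact hL1 C h
      · exact hL2 C h
    · have a1 : PF (impList (L1 ++ L2) (.imp P Q)) :=
        PF.mp (impListAppendRight L1 L2 _) hp1
      have a2 : PF (impList (L1 ++ L2) P) :=
        PF.mp (impListAppendLeft L1 L2 _) hp2
      exact PF.mp (PF.mp (impListMpThm (L1 ++ L2) P Q) a1) a2

lemma Ded.ofImpListDed {Γ : Set Formula} {B : Formula} {L : List Formula}
    (hL : ∀ C ∈ L, C ∈ Γ) (h : Ded Γ (impList L B)) : Ded Γ B := by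
  induction L generalizing B with
  | nil => exact h
  | cons C L ih =>
    refine ih (fun D hD => hL D (List.mem_cons_of_mem _ hD)) ?_
    exact Ded.mp h (Ded.ax (hL C List.mem_cons_self))

lemma Ded.ofImpList {Γ : Set Formula} {B : Formula} {L : List Formula}
    (hL : ∀ C ∈ L, C ∈ Γ) (h : PF (impList L B)) : Ded Γ B :=
  Ded.ofImpListDed hL (Ded.pf h)

def Con (Γ : Set Formula) : Prop := ¬ Ded Γ Bot

def MCS (Γ : Set Formula) : Prop := Con Γ ∧ ∀ B, B ∈ Γ ∨ .neg B ∈ Γ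


lemma pfOr1 (A B : Formula) : PF (.imp A (.or A B)) := by
  apply PF.taut; intro f hn ha ho hi
  simp only [hi, ho]; cases f A <;> cases f B <;> rfl

lemma pfOr2 (A B : Formula) : PF (.imp B (.or A B)) := by
  apply PF.taut; intro f hn ha ho hi
  simp only [hi, ho]; cases f A <;> cases f B <;> rfl

lemma pfOrNeg (A B : Formula) : PF (.imp (.or A B) (.imp (.neg A) B)) := by
  apply PF.taut; intro f hn ha ho hi
  simp only [hi, ho, hn]; cases f A <;> cases f B <;> rfl

lemma notCon_ded {Γ : Set Formula} {B : Formula} (h : ¬ Con (insert B Γ)) :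
    Ded Γ (.imp B Bot) := deduction (not_not.mp h)

lemma mcs_ded {Γ : Set Formula} (hm : MCS Γ) {B : Formula} (h : Ded Γ B) : B ∈ Γ := by
  rcases hm.2 B with hB | hB
  · exact hB
  · exact (hm.1 (Ded.mp (Ded.mp (Ded.pf (pfNegE B)) h) (Ded.ax hB))).elim

lemma mcs_pf {Γ : Set Formula} (hm : MCS Γ) {B : Formula} (h : PF B) : B ∈ Γ :=
  mcs_ded hm (Ded.pf h)

lemma mcs_mp {Γ : Set Formula} (hm : MCS Γ) {B C : Formula}
    (h : PF (.imp B C)) (hB : B ∈ Γ) : C ∈ Γ :=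
  mcs_ded hm (Ded.mp (Ded.pf h) (Ded.ax hB))

lemma mcs_neg {Γ : Set Formula} (hm : MCS Γ) {B : Formula} :
    .neg B ∈ Γ ↔ B ∉ Γ := by
  constructor
  · intro hn hB
    exact hm.1 (Ded.mp (Ded.mp (Ded.pf (pfNegE B)) (Ded.ax hB)) (Ded.ax hn))
  · intro hB; rcases hm.2 B with h | h
    · exact absurd h hB
    · exact h

lemma mcs_imp {Γ : Set Formula} (hm : MCS Γ) {B C : Formula} :
    .imp B C ∈ Γ ↔ (B ∈ Γ → C ∈ Γ) := by
  constructor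
  · intro h hB; exact mcs_ded hm (Ded.mp (Ded.ax h) (Ded.ax hB))
  · intro h
    by_cases hB : B ∈ Γ
    · exact mcs_mp hm (tautK C B) (h hB)
    · exact mcs_mp hm (pfNegImp B C) ((mcs_neg hm).2 hB)

lemma mcs_and {Γ : Set Formula} (hm : MCS Γ) {B C : Formula} :
    .and B C ∈ Γ ↔ (B ∈ Γ ∧ C ∈ Γ) := by
  constructor
  · intro h; exact ⟨mcs_mp hm (pfAnd1 B C) h, mcs_mp hm (pfAnd2 B C) h⟩
  · intro ⟨h1, h2⟩
    exact mcs_ded hm (Ded.mp (Ded.mp (Ded.pf (pfAndIntro B C)) (Ded.ax h1)) (Ded.ax h2))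

lemma mcs_or {Γ : Set Formula} (hm : MCS Γ) {B C : Formula} :
    .or B C ∈ Γ ↔ (B ∈ Γ ∨ C ∈ Γ) := by
  constructor
  · intro h
    by_cases hB : B ∈ Γ
    · exact Or.inl hB
    · exact Or.inr (mcs_ded hm (Ded.mp (Ded.mp (Ded.pf (pfOrNeg B C)) (Ded.ax h))
        (Ded.ax ((mcs_neg hm).2 hB))))
  · rintro (h | h)
    · exact mcs_mp hm (pfOr1 B C) h
    · exact mcs_mp hm (pfOr2 B C) h

lemma Ded.finiteSupport {Γ : Set Formula} {B : Formula} (h : Ded Γ B) :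
    ∃ s : Finset Formula, ↑s ⊆ Γ ∧ Ded (↑s : Set Formula) B := by
  obtain ⟨L, hL, hp⟩ := h.toImpList
  refine ⟨L.toFinset, ?_, Ded.ofImpList (fun C hC => ?_) hp⟩
  · intro x hx
    simp only [Finset.coe_sort_coe, List.coe_toFinset, Set.mem_setOf_eq] at hx
    exact hL x hx
  · simp only [Finset.coe_sort_coe, List.coe_toFinset, Set.mem_setOf_eq]
    exact hC

lemma finset_in_chain {c : Set (Set Formula)} (hc : IsChain (· ⊆ ·) c) (hne : c.Nonempty)
    (s : Finset Formula) (hs : ↑s ⊆ ⋃₀ c) : ∃ T ∈ c, ↑s ⊆ T := by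
  classical
  induction s using Finset.induction_on with
  | empty => exact ⟨hne.choose, hne.choose_spec, by simp⟩
  | @insert x s hx ih =>
    have hxc : x ∈ ⋃₀ c := hs (by simp)
    obtain ⟨T1, hT1, hxT1⟩ := hxc
    obtain ⟨T2, hT2, hsT2⟩ := ih (by
      intro y hy
      exact hs (by simp only [Finset.coe_insert, Set.mem_insert_iff]; exact Or.inr hy))
    by_cases heq : T1 = T2
    · subst heq
      exact ⟨T1, hT1, by
        intro y hy
        rcases Set.mem_insert_iff.1 (by rw [Finset.coe_insert] at hy; exact hy) with h | h
        · subst h; exact hxT1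
        · exact hsT2 h⟩
    · rcases hc hT1 hT2 heq with h | h
      · exact ⟨T2, hT2, by
          intro y hy
          rcases Set.mem_insert_iff.1 (by rw [Finset.coe_insert] at hy; exact hy) with hh | hh
          · subst hh; exact h hxT1
          · exact hsT2 hh⟩
      · exact ⟨T1, hT1, by
          intro y hy
          rcases Set.mem_insert_iff.1 (by rw [Finset.coe_insert] at hy; exact hy) with hh | hh
          · subst hh; exact hxT1
          · exact h (hsT2 hh)⟩

lemma conChainUb : ∀ c ⊆ {Δ : Set Formula | Con Δ}, IsChain (· ⊆ ·) c → c.Nonempty →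
    ∃ ub ∈ {Δ : Set Formula | Con Δ}, ∀ s ∈ c, s ⊆ ub := by
  intro c hcS hchain hcne
  refine ⟨⋃₀ c, ?_, fun s hs => Set.subset_sUnion_of_mem hs⟩
  intro hded
  obtain ⟨s, hsub, hds⟩ := hded.finiteSupport
  obtain ⟨T, hTc, hsT⟩ := finset_in_chain hchain hcne s hsub
  exact hcS hTc (hds.mono hsT)

lemma lindenbaum {Γ : Set Formula} (h : Con Γ) : ∃ Δ, Γ ⊆ Δ ∧ MCS Δ := by
  obtain ⟨m, hΓm, hmax⟩ := zorn_subset_nonempty {Δ | Con Δ} conChainUb Γ h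
  refine ⟨m, hΓm, hmax.1, fun B => ?_⟩
  by_contra hB
  push_neg at hB
  have h1 : ¬ Con (insert B m) := by
    intro hcon
    have := hmax.2 hcon (Set.subset_insert _ _)
    exact hB.1 (this (Set.mem_insert _ _))
  have h2 : ¬ Con (insert (.neg B) m) := by
    intro hcon
    have := hmax.2 hcon (Set.subset_insert _ _)
    exact hB.2 (this (Set.mem_insert _ _))
  exact hmax.1 (Ded.mp (Ded.mp (Ded.pf (pfCases B)) (notCon_ded h1)) (notCon_ded h2))


lemma pfNegIntro (X : Formula) : PF (.imp (.imp X Bot) (.neg X)) := by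
  apply PF.taut; intro f hn ha ho hi
  simp only [Bot, hi, hn]; cases f X <;> cases f (Formula.var 0) <;> rfl

lemma pfContra (X Y : Formula) : PF (.imp (.imp X Y) (.imp (.neg Y) (.neg X))) := by
  apply PF.taut; intro f hn ha ho hi
  simp only [hi, hn]; cases f X <;> cases f Y <;> rfl

lemma pfDNI (B : Formula) : PF (.imp B (.neg (.neg B))) := by
  apply PF.taut; intro f hn ha ho hi
  simp only [hi, hn]; cases f B <;> rfl

lemma pfDNEr (B : Formula) : PF (.imp (.neg (.neg B)) B) := by
  apply PF.taut; intro f hn ha ho hi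
  simp only [hi, hn]; cases f B <;> rfl

/-- two-set version of `Ded.toImpList`. -/
lemma Ded.toImpList2 {Γ₁ Γ₂ : Set Formula} {B : Formula} (h : Ded (Γ₁ ∪ Γ₂) B) :
    ∃ L1 L2 : List Formula, (∀ C ∈ L1, C ∈ Γ₁) ∧ (∀ C ∈ L2, C ∈ Γ₂) ∧
      PF (impList L1 (impList L2 B)) := by
  induction h with
  | @ax B hB =>
    rcases hB with h | h
    · exact ⟨[B], [], by simpa using h, by simp, pfImpSelf B⟩
    · exact ⟨[], [B], by simp, by simpa using h, pfImpSelf B⟩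
  | @pf B hB => exact ⟨[], [], by simp, by simp, hB⟩
  | @mp P Q _ _ ih1 ih2 =>
    obtain ⟨L1, L2, h1, h2, hp1⟩ := ih1
    obtain ⟨L1', L2', h1', h2', hp2⟩ := ih2
    refine ⟨L1 ++ L1', L2 ++ L2', ?_, ?_, ?_⟩
    · intro C hC; rcases List.mem_append.1 hC with h | h
      · exact h1 C h
      · exact h1' C h
    · intro C hC; rcases List.mem_append.1 hC with h | h
      · exact h2 C h
      · exact h2' C h
    · have a1 : PF (impList (L1 ++ L1') (impList (L2 ++ L2') (.imp P Q))) := by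
        have := PF.mp (impListMono (impListAppendRight L2 L2' (.imp P Q)) L1) hp1
        exact PF.mp (impListAppendRight L1 L1' _) this
      have a2 : PF (impList (L1 ++ L1') (impList (L2 ++ L2') P)) := by
        have := PF.mp (impListMono (impListAppendLeft L2 L2' P) L1') hp2
        exact PF.mp (impListAppendLeft L1 L1' _) this
      have t := impListMpThm (L2 ++ L2') P Q
      have a3 := PF.mp (impListMono t (L1 ++ L1')) a1
      exact PF.mp (PF.mp (impListMpThm (L1 ++ L1') _ _) a3) a2

/-- `∃ L' ⊆ L` with `⊢ impList L' ¬(impList L ⊥)`. -/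
lemma impListNegSelf (L : List Formula) :
    ∃ L' : List Formula, (∀ C ∈ L', C ∈ L) ∧
      PF (impList L' (.neg (impList L Bot))) := by
  set D := impList L Bot with hD
  have h0 : Ded (insert D {C | C ∈ L}) Bot := by
    refine Ded.ofImpListDed (L := L) (fun C hC => Or.inr hC) (Ded.ax (Or.inl rfl))
  have h1 : Ded {C | C ∈ L} (.neg D) :=
    Ded.mp (Ded.pf (pfNegIntro D)) (deduction h0)
  obtain ⟨L', hL', hp⟩ := h1.toImpList
  exact ⟨L', hL', hp⟩

/-! ### Canonical relations on maximal consistent sets -/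

def Rfc (x y : Set Formula) : Prop := ∀ B, .boxf B ∈ x → B ∈ y

def Rpc (x y : Set Formula) : Prop := ∀ B, .boxp B ∈ x → (B ∈ y ∧ .boxp B ∈ y)

lemma rfc_refl {x : Set Formula} (hx : MCS x) : Rfc x x :=
  fun B hB => mcs_mp hx (PF.tf B) hB

lemma rfc_boxf {x y : Set Formula} (hx : MCS x) (h : Rfc x y) {B : Formula}
    (hB : .boxf B ∈ x) : .boxf B ∈ y :=
  h _ (mcs_mp hx (PF.fourf B) hB)

lemma rfc_trans {x y z : Set Formula} (hx : MCS x) (h1 : Rfc x y) (h2 : Rfc y z) :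
    Rfc x z := fun B hB => h2 B (rfc_boxf hx h1 hB)

/-- `⊢ ¬□pB → □f¬□pB`. -/
lemma pfNegBoxpPersist (B : Formula) :
    PF (.imp (.neg (.boxp B)) (.boxf (.neg (.boxp B)))) := by
  have h1 : PF (.imp (.neg (.boxp B)) (diap (.neg B))) := by
    unfold diap
    exact PF.mp (pfContra _ _) (regp (pfDNEr B))
  have h2 : PF (.imp (diap (.neg B)) (.boxf (diap (.neg B)))) := PF.pf2 (.neg B)
  have h3 : PF (.imp (.boxf (diap (.neg B))) (.boxf (.neg (.boxp B)))) := by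
    refine regf ?_
    unfold diap
    exact PF.mp (pfContra _ _) (regp (pfDNI B))
  exact pfImpTrans (pfImpTrans h1 h2) h3

/-- `□p`-formulas are constant along the canonical `≼`. -/
lemma rfc_boxp_iff {x y : Set Formula} (hx : MCS x) (hy : MCS y) (h : Rfc x y)
    (B : Formula) : .boxp B ∈ x ↔ .boxp B ∈ y := by
  constructor
  · intro hB; exact h _ (mcs_mp hx (PF.pf1 B) hB)
  · intro hB
    by_contra hnx
    have h1 : .neg (.boxp B) ∈ x := (mcs_neg hx).2 hnx
    have h2 : .neg (.boxp B) ∈ y := h _ (mcs_mp hx (pfNegBoxpPersist B) h1)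
    exact ((mcs_neg hy).1 h2) hB

/-- canonical existence lemma for `□f`. -/
lemma boxf_existence {x : Set Formula} (hx : MCS x) {B : Formula}
    (hB : .boxf B ∉ x) : ∃ y, MCS y ∧ Rfc x y ∧ .neg B ∈ y := by
  have hcon : Con (insert (.neg B) {C | .boxf C ∈ x}) := by
    intro hded
    have h1 : Ded {C | .boxf C ∈ x} (.imp (.neg B) Bot) := deduction hded
    obtain ⟨L, hL, hp⟩ := h1.toImpList
    have h2 : PF (impList L B) := PF.mp (impListMono (pfDNE B) L) hp
    have h3 : PF (impList (L.map .boxf) (.boxf B)) :=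
      PF.mp (boxfImpList L B) (PF.necf h2)
    have h4 : Ded x (.boxf B) := by
      refine Ded.ofImpList (fun C hC => ?_) h3
      obtain ⟨D, hD, rfl⟩ := List.mem_map.1 hC
      exact hL D hD
    exact hB (mcs_ded hx h4)
  obtain ⟨Δ, hsub, hΔ⟩ := lindenbaum hcon
  refine ⟨Δ, hΔ, fun C hC => hsub (Or.inr hC), hsub (Or.inl rfl)⟩

/-- canonical existence lemma for `□p` (GL-style). -/
lemma boxp_existence {x : Set Formula} (hx : MCS x) {B : Formula}
    (hB : .boxp B ∉ x) :
    ∃ y, MCS y ∧ Rpc x y ∧ .boxp B ∈ y ∧ .neg B ∈ y := by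
  set Γc : Set Formula := {D | ∃ C, .boxp C ∈ x ∧ D = .and C (.boxp C)} with hΓc
  have hcon : Con (insert (.neg B) (insert (.boxp B) Γc)) := by
    intro hded
    have h1 : Ded Γc (.imp (.boxp B) (.imp (.neg B) Bot)) := deduction (deduction hded)
    obtain ⟨L, hL, hp⟩ := h1.toImpList
    have h2 : PF (impList L (.imp (.boxp B) B)) := by
      refine PF.mp (impListMono ?_ L) hp
      exact pfImpDistL (.boxp B) (pfDNE B) |> fun t => by
        refine pfImpTrans ?_ t
        exact pfImpSelf _
    have h3 : PF (impList (L.map .boxp) (.boxp (.imp (.boxp B) B))) :=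
      PF.mp (boxpImpList L _) (PF.necp h2)
    have h4 : PF (impList (L.map .boxp) (.boxp B)) :=
      PF.mp (impListMono (PF.lob B) _) h3
    have h5 : Ded x (.boxp B) := by
      refine Ded.ofImpList (fun C hC => ?_) h4
      obtain ⟨D, hD, rfl⟩ := List.mem_map.1 hC
      obtain ⟨C, hCx, rfl⟩ := hL D hD
      have u1 : .boxp (.boxp C) ∈ x := mcs_mp hx (pfFourp C) hCx
      exact mcs_ded hx (Ded.mp (Ded.mp (Ded.pf (pfBoxpAnd C (.boxp C)))
        (Ded.ax hCx)) (Ded.ax u1))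
    exact hB (mcs_ded hx h5)
  obtain ⟨Δ, hsub, hΔ⟩ := lindenbaum hcon
  refine ⟨Δ, hΔ, ?_, hsub (Or.inr (Or.inl rfl)), hsub (Or.inl rfl)⟩
  intro C hC
  have hmem : .and C (.boxp C) ∈ Δ := hsub (Or.inr (Or.inr ⟨C, hC, rfl⟩))
  exact ⟨(mcs_and hΔ).1 hmem |>.1, (mcs_and hΔ).1 hmem |>.2⟩

/-- if `Rfc x y` and `D ∈ y` then `◇f D ∈ x`. -/
lemma rfc_diaf {x y : Set Formula} (hx : MCS x) (hy : MCS y) (h : Rfc x y)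
    {D : Formula} (hD : D ∈ y) : .neg (.boxf (.neg D)) ∈ x := by
  rcases hx.2 (.neg (.boxf (.neg D))) with hh | hh
  · exact hh
  · have h1 : .boxf (.neg D) ∈ x := mcs_mp hx (pfDNEr _) hh
    exact absurd hD ((mcs_neg hy).1 (h _ h1))

/-- canonical confluence for `≼` (from the `.2` axiom). -/
lemma rfc_confluence {x y z : Set Formula} (hx : MCS x) (hy : MCS y) (hz : MCS z)
    (h1 : Rfc x y) (h2 : Rfc x z) :
    ∃ w, MCS w ∧ Rfc y w ∧ Rfc z w := by
  have hcon : Con ({C | .boxf C ∈ y} ∪ {C | .boxf C ∈ z}) := by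
    intro hded
    obtain ⟨L1, L2, hL1, hL2, hp⟩ := hded.toImpList2
    set D := impList L2 Bot with hDdef
    have h3 : PF (impList (L1.map .boxf) (.boxf D)) :=
      PF.mp (boxfImpList L1 D) (PF.necf hp)
    have h4 : .boxf D ∈ y := by
      refine mcs_ded hy (Ded.ofImpList (fun C hC => ?_) h3)
      obtain ⟨C', hC', rfl⟩ := List.mem_map.1 hC
      exact hL1 C' hC'
    have h5 : .neg (.boxf (.neg (.boxf D))) ∈ x := rfc_diaf hx hy h1 h4
    have h6 : .boxf (diaf D) ∈ x := mcs_mp hx (PF.dot2f D) h5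
    have h7 : diaf D ∈ z := h2 _ h6
    have h8 : .boxf (.neg D) ∉ z := by
      intro hmem
      exact (mcs_neg hz).1 h7 hmem
    obtain ⟨L', hL', hp'⟩ := impListNegSelf L2
    have h9 : PF (impList (L'.map .boxf) (.boxf (.neg D))) :=
      PF.mp (boxfImpList L' _) (PF.necf hp')
    have h10 : .boxf (.neg D) ∈ z := by
      refine mcs_ded hz (Ded.ofImpList (fun C hC => ?_) h9)
      obtain ⟨C', hC', rfl⟩ := List.mem_map.1 hC
      exact hL2 C' (hL' C' hC')
    exact h8 h10
  obtain ⟨w, hsub, hw⟩ := lindenbaum hcon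
  exact ⟨w, hw, fun C hC => hsub (Or.inl hC), fun C hC => hsub (Or.inr hC)⟩


/-! ### Subformula closure -/

lemma self_mem_subf (A : Formula) : A ∈ subf A := by
  cases A <;> simp [subf]

lemma subf_trans : ∀ (A : Formula), ∀ B ∈ subf A, ∀ C ∈ subf B, C ∈ subf A := by
  intro A
  induction A with
  | var n =>
    intro B hB C hC
    simp only [subf, List.mem_singleton] at hB
    subst hB; simpa [subf] using hC
  | neg A ih =>
    intro B hB C hC
    rcases List.mem_cons.1 hB with h | h
    · subst h; exact hC
    · exact List.mem_cons.2 (Or.inr (ih B h C hC))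
  | and A1 A2 ih1 ih2 =>
    intro B hB C hC
    rcases List.mem_cons.1 hB with h | h
    · subst h; exact hC
    · rcases List.mem_append.1 h with h | h
      · exact List.mem_cons.2 (Or.inr (List.mem_append.2 (Or.inl (ih1 B h C hC))))
      · exact List.mem_cons.2 (Or.inr (List.mem_append.2 (Or.inr (ih2 B h C hC))))
  | or A1 A2 ih1 ih2 =>
    intro B hB C hC
    rcases List.mem_cons.1 hB with h | h
    · subst h; exact hC
    · rcases List.mem_append.1 h with h | h
      · exact List.mem_cons.2 (Or.inr (List.mem_append.2 (Or.inl (ih1 B h C hC))))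
      · exact List.mem_cons.2 (Or.inr (List.mem_append.2 (Or.inr (ih2 B h C hC))))
  | imp A1 A2 ih1 ih2 =>
    intro B hB C hC
    rcases List.mem_cons.1 hB with h | h
    · subst h; exact hC
    · rcases List.mem_append.1 h with h | h
      · exact List.mem_cons.2 (Or.inr (List.mem_append.2 (Or.inl (ih1 B h C hC))))
      · exact List.mem_cons.2 (Or.inr (List.mem_append.2 (Or.inr (ih2 B h C hC))))
  | boxp A ih =>
    intro B hB C hC
    rcases List.mem_cons.1 hB with h | h
    · subst h; exact hC
    · exact List.mem_cons.2 (Or.inr (ih B h C hC))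
  | boxf A ih =>
    intro B hB C hC
    rcases List.mem_cons.1 hB with h | h
    · subst h; exact hC
    · exact List.mem_cons.2 (Or.inr (ih B h C hC))

section Model

variable (A₀ : Formula)

/-- the closure set. -/
def PhiS : Set Formula := {B | B ∈ subf A₀}

lemma phiS_finite : (PhiS A₀).Finite := (subf A₀).finite_toSet

lemma phiS_sub {B C : Formula} (hB : B ∈ PhiS A₀) (hC : C ∈ subf B) : C ∈ PhiS A₀ :=
  subf_trans A₀ B hB C hC

lemma phiS_neg {B : Formula} (h : .neg B ∈ PhiS A₀) : B ∈ PhiS A₀ :=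
  phiS_sub A₀ h (List.mem_cons.2 (Or.inr (self_mem_subf B)))

lemma phiS_and {B C : Formula} (h : .and B C ∈ PhiS A₀) : B ∈ PhiS A₀ ∧ C ∈ PhiS A₀ :=
  ⟨phiS_sub A₀ h (List.mem_cons.2 (Or.inr (List.mem_append.2 (Or.inl (self_mem_subf B))))),
   phiS_sub A₀ h (List.mem_cons.2 (Or.inr (List.mem_append.2 (Or.inr (self_mem_subf C)))))⟩

lemma phiS_or {B C : Formula} (h : .or B C ∈ PhiS A₀) : B ∈ PhiS A₀ ∧ C ∈ PhiS A₀ :=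
  ⟨phiS_sub A₀ h (List.mem_cons.2 (Or.inr (List.mem_append.2 (Or.inl (self_mem_subf B))))),
   phiS_sub A₀ h (List.mem_cons.2 (Or.inr (List.mem_append.2 (Or.inr (self_mem_subf C)))))⟩

lemma phiS_imp {B C : Formula} (h : .imp B C ∈ PhiS A₀) : B ∈ PhiS A₀ ∧ C ∈ PhiS A₀ :=
  ⟨phiS_sub A₀ h (List.mem_cons.2 (Or.inr (List.mem_append.2 (Or.inl (self_mem_subf B))))),
   phiS_sub A₀ h (List.mem_cons.2 (Or.inr (List.mem_append.2 (Or.inr (self_mem_subf C)))))⟩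

lemma phiS_boxp {B : Formula} (h : .boxp B ∈ PhiS A₀) : B ∈ PhiS A₀ :=
  phiS_sub A₀ h (List.mem_cons.2 (Or.inr (self_mem_subf B)))

lemma phiS_boxf {B : Formula} (h : .boxf B ∈ PhiS A₀) : B ∈ PhiS A₀ :=
  phiS_sub A₀ h (List.mem_cons.2 (Or.inr (self_mem_subf B)))

/-- the `Φ`-type of a set of formulas. -/
def tyOf (u : Set Formula) : Set Formula := {B | B ∈ PhiS A₀ ∧ B ∈ u}

/-- realized types above a base `z`. -/
def Qset (z : Set Formula) : Set (Set Formula) :=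
  {τ | ∃ u, MCS u ∧ Rfc z u ∧ τ = tyOf A₀ u}

/-- the filtration preorder on types. -/
def tleq (τ σ : Set Formula) : Prop :=
  ∀ B, .boxf B ∈ τ → (.boxf B ∈ σ ∧ B ∈ σ)

def teq (τ σ : Set Formula) : Prop := tleq τ σ ∧ tleq σ τ

lemma tleq_trans {τ σ ω : Set Formula} (h1 : tleq τ σ) (h2 : tleq σ ω) : tleq τ ω :=
  fun B hB => h2 B (h1 B hB).1

lemma tleq_of_rfc {u v : Set Formula} (hu : MCS u) (h : Rfc u v) :
    tleq (tyOf A₀ u) (tyOf A₀ v) := by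
  intro B hB
  obtain ⟨hΦ, hu'⟩ := hB
  exact ⟨⟨hΦ, rfc_boxf hu h hu'⟩, ⟨phiS_boxf A₀ hΦ, h B hu'⟩⟩

lemma tleq_refl_of_mcs {u : Set Formula} (hu : MCS u) : tleq (tyOf A₀ u) (tyOf A₀ u) :=
  tleq_of_rfc A₀ hu (rfc_refl hu)

lemma qset_finite (z : Set Formula) : (Qset A₀ z).Finite := by
  have h1 : Qset A₀ z ⊆ {τ | τ ⊆ PhiS A₀} := by
    rintro τ ⟨u, _, _, rfl⟩
    intro B hB; exact hB.1
  exact Set.Finite.subset ((phiS_finite A₀).finite_subsets) h1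

lemma qset_refl {τ : Set Formula} {z : Set Formula} (h : τ ∈ Qset A₀ z) : tleq τ τ := by
  obtain ⟨u, hu, _, rfl⟩ := h
  exact tleq_refl_of_mcs A₀ hu

/-! ### the `Val` map : pre-Boolean structure of a cluster -/

def pairwiseComp (a : Set (Set Formula)) : Prop :=
  ∀ τ ∈ a, ∀ σ ∈ a, tleq τ σ ∨ tleq σ τ

def isTopOf (a : Set (Set Formula)) (σ : Set Formula) : Prop :=
  σ ∈ a ∧ ∀ τ ∈ a, tleq τ σ

def Val (ρ θ : Set Formula) (a : Set (Set Formula)) (τ : Set Formula) : Prop :=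
  (a = ∅ ∧ teq τ ρ) ∨
  (a ≠ ∅ ∧ pairwiseComp a ∧ ∃ σ, isTopOf a σ ∧ teq τ σ) ∨
  (¬ pairwiseComp a ∧ teq τ θ)

lemma exists_top_of_chain (s : Finset (Set Formula))
    (hcomp : ∀ τ ∈ s, ∀ σ ∈ s, tleq τ σ ∨ tleq σ τ)
    (hrefl : ∀ τ ∈ s, tleq τ τ) (hne : s.Nonempty) :
    ∃ σ ∈ s, ∀ τ ∈ s, tleq τ σ := by
  classical
  revert hcomp hrefl hne
  induction s using Finset.induction_on with
  | empty => intro _ _ hne; exact absurd hne (by simp)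
  | @insert x s hx ih =>
    intro hcomp hrefl hne
    by_cases hs : s.Nonempty
    · obtain ⟨σ, hσs, hσ⟩ := ih (fun τ hτ σ hσ => hcomp τ (by simp [hτ]) σ (by simp [hσ]))
        (fun τ hτ => hrefl τ (by simp [hτ])) hs
      rcases hcomp x (by simp) σ (by simp [hσs]) with h | h
      · refine ⟨σ, by simp [hσs], fun τ hτ => ?_⟩
        rcases Finset.mem_insert.1 hτ with rfl | hτ
        · exact h
        · exact hσ τ hτ
      · refine ⟨x, by simp, fun τ hτ => ?_⟩
        rcases Finset.mem_insert.1 hτ with rfl | hτ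
        · exact hrefl _ (by simp)
        · exact tleq_trans (hσ τ hτ) h
    · rw [Finset.not_nonempty_iff_eq_empty] at hs
      subst hs
      exact ⟨x, by simp, fun τ hτ => by
        rcases Finset.mem_insert.1 hτ with rfl | hτ
        · exact hrefl _ (by simp)
        · exact absurd hτ (by simp)⟩

section ValLemmas

variable {Q : Set (Set Formula)} {ρ θ : Set Formula}
variable (hQfin : Q.Finite)
variable (hrefl : ∀ τ ∈ Q, tleq τ τ)
variable (hρ : ρ ∈ Q) (hρroot : ∀ σ ∈ Q, tleq ρ σ)
variable (hθ : θ ∈ Q) (hθtop : ∀ σ ∈ Q, tleq σ θ)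

include hQfin hrefl hρ hρroot hθ hθtop in
lemma val_nonempty {a : Set (Set Formula)} (ha : a ⊆ Q) :
    ∃ τ ∈ Q, Val ρ θ a τ := by
  classical
  by_cases hae : a = ∅
  · exact ⟨ρ, hρ, Or.inl ⟨hae, hrefl ρ hρ, hrefl ρ hρ⟩⟩
  by_cases hpc : pairwiseComp a
  · have hafin : a.Finite := hQfin.subset ha
    obtain ⟨σ, hσa, hσ⟩ := exists_top_of_chain hafin.toFinset
      (by intro τ hτ σ hσ
          exact hpc τ (by rwa [Set.Finite.mem_toFinset] at hτ) σ
            (by rwa [Set.Finite.mem_toFinset] at hσ))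
      (by intro τ hτ
          exact hrefl τ (ha (by rwa [Set.Finite.mem_toFinset] at hτ)))
      (by rwa [Set.Finite.toFinset_nonempty, Set.nonempty_iff_ne_empty])
    rw [Set.Finite.mem_toFinset] at hσa
    refine ⟨σ, ha hσa, Or.inr (Or.inl ⟨hae, hpc, σ, ⟨hσa, fun τ hτ => ?_⟩,
      hrefl σ (ha hσa), hrefl σ (ha hσa)⟩)⟩
    exact hσ τ (by rwa [Set.Finite.mem_toFinset])
  · exact ⟨θ, hθ, Or.inr (Or.inr ⟨hpc, hrefl θ hθ, hrefl θ hθ⟩)⟩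

include hrefl hρ hρroot hθ hθtop in
lemma val_mono {a b : Set (Set Formula)} (ha : a ⊆ Q) (hb : b ⊆ Q)
    (hab : a ⊆ b) {τ π : Set Formula} (hτ : τ ∈ Q) (hπ : π ∈ Q)
    (hva : Val ρ θ a τ) (hvb : Val ρ θ b π) : tleq τ π := by
  rcases hva with ⟨hae, hte⟩ | ⟨hane, hpca, σa, hta, htea⟩ | ⟨hnpc, hte⟩
  · exact tleq_trans hte.1 (hρroot π hπ)
  · rcases hvb with ⟨hbe, _⟩ | ⟨_, _, σb, htb, hteb⟩ | ⟨_, hteb⟩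
    · exact absurd (Set.subset_empty_iff.1 (hbe ▸ hab)) hane
    · exact tleq_trans htea.1 (tleq_trans (htb.2 σa (hab hta.1)) hteb.2)
    · exact tleq_trans htea.1 (tleq_trans (hθtop σa (ha hta.1)) hteb.2)
  · rcases hvb with ⟨hbe, _⟩ | ⟨_, hpcb, _⟩ | ⟨_, hteb⟩
    · exact absurd (by simp [hbe ▸ hab] : a ⊆ (∅ : Set (Set Formula))) (by
        intro h
        exact hnpc (fun τ hτ => absurd (h hτ) (Set.notMem_empty _)))
    · exact absurd (fun x hx y hy => hpcb x (hab hx) y (hab hy)) hnpc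
    · exact tleq_trans hte.1 hteb.2

include hrefl hθtop in
lemma val_back {a : Set (Set Formula)} (ha : a ⊆ Q) {τ τ' : Set Formula}
    (hτ' : τ' ∈ Q) (hva : Val ρ θ a τ) (hle : tleq τ τ') :
    Val ρ θ (a ∪ {τ'}) τ' := by
  have hrefl' : tleq τ' τ' := hrefl τ' hτ'
  rcases hva with ⟨hae, hte⟩ | ⟨hane, hpca, σa, hta, htea⟩ | ⟨hnpc, hte⟩
  · subst hae
    refine Or.inr (Or.inl ⟨by simp, ?_, τ', ⟨by simp, ?_⟩, hrefl', hrefl'⟩)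
    · intro x hx y hy
      simp only [Set.empty_union, Set.mem_singleton_iff] at hx hy
      rw [hx, hy]; exact Or.inl hrefl'
    · intro x hx
      simp only [Set.empty_union, Set.mem_singleton_iff] at hx
      rw [hx]; exact hrefl'
  · have hσle : tleq σa τ' := tleq_trans htea.2 hle
    have hup : ∀ x ∈ a ∪ {τ'}, tleq x τ' := by
      intro x hx
      rcases hx with hx | hx
      · exact tleq_trans (hta.2 x hx) hσle
      · rw [Set.mem_singleton_iff] at hx; rw [hx]; exact hrefl'
    refine Or.inr (Or.inl ⟨by
        rw [Set.union_singleton]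
        exact (Set.insert_nonempty _ _).ne_empty,
      ?_, τ', ⟨by simp, hup⟩, ⟨hrefl', hrefl'⟩⟩)
    intro x hx y hy
    rcases hx with hx | hx
    · rcases hy with hy | hy
      · exact hpca x hx y hy
      · rw [Set.mem_singleton_iff] at hy; rw [hy]
        exact Or.inl (hup x (Or.inl hx))
    · rw [Set.mem_singleton_iff] at hx; rw [hx]
      exact Or.inr (hup y hy)
  · refine Or.inr (Or.inr ⟨?_, hθtop τ' hτ', tleq_trans hte.2 hle⟩)
    intro hpc
    exact hnpc (fun x hx y hy => hpc x (Or.inl hx) y (Or.inl hy))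

end ValLemmas

end Model


lemma rfc_confluence_list {z : Set Formula} (hz : MCS z) :
    ∀ l : List (Set Formula), (∀ u ∈ l, MCS u ∧ Rfc z u) →
      ∃ w, MCS w ∧ Rfc z w ∧ ∀ u ∈ l, Rfc u w := by
  intro l
  induction l with
  | nil => exact fun _ => ⟨z, hz, rfc_refl hz, by simp⟩
  | cons u us ih =>
    intro hl
    obtain ⟨w', hw', hzw', hus⟩ := ih (fun v hv => hl v (List.mem_cons_of_mem _ hv))
    have hu := hl u List.mem_cons_self
    obtain ⟨w, hw, h1, h2⟩ := rfc_confluence hz hu.1 hw' hu.2 hzw'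
    refine ⟨w, hw, rfc_trans hz hzw' h2, ?_⟩
    intro v hv
    rcases List.mem_cons.1 hv with rfl | hv
    · exact h1
    · exact rfc_trans (hl v (List.mem_cons_of_mem _ hv)).1 (hus v hv) h2

section Model2

variable (A₀ : Formula)

open Classical in
noncomputable def repOf (z τ : Set Formula) : Set Formula :=
  if h : ∃ u, MCS u ∧ Rfc z u ∧ τ = tyOf A₀ u then h.choose else z

lemma repOf_spec {z τ : Set Formula} (h : τ ∈ Qset A₀ z) :
    MCS (repOf A₀ z τ) ∧ Rfc z (repOf A₀ z τ) ∧ tyOf A₀ (repOf A₀ z τ) = τ := by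
  have h' : ∃ u, MCS u ∧ Rfc z u ∧ τ = tyOf A₀ u := h
  rw [repOf, dif_pos h']
  obtain ⟨h1, h2, h3⟩ := h'.choose_spec
  exact ⟨h1, h2, h3.symm⟩

lemma exists_topMCS {z : Set Formula} (hz : MCS z) :
    ∃ w, MCS w ∧ Rfc z w ∧ ∀ τ ∈ Qset A₀ z, tleq τ (tyOf A₀ w) := by
  classical
  set l := (qset_finite A₀ z).toFinset.toList.map (repOf A₀ z) with hl_def
  have hl : ∀ u ∈ l, MCS u ∧ Rfc z u := by
    intro u hu
    obtain ⟨τ, hτ, rfl⟩ := List.mem_map.1 hu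
    have hτQ : τ ∈ Qset A₀ z := by
      rw [Finset.mem_toList, Set.Finite.mem_toFinset] at hτ
      exact hτ
    obtain ⟨h1, h2, _⟩ := repOf_spec A₀ hτQ
    exact ⟨h1, h2⟩
  obtain ⟨w, hw, hzw, hrep⟩ := rfc_confluence_list hz l hl
  refine ⟨w, hw, hzw, ?_⟩
  intro τ hτ
  have hmem : repOf A₀ z τ ∈ l :=
    List.mem_map_of_mem (by rw [Finset.mem_toList, Set.Finite.mem_toFinset]; exact hτ)
  obtain ⟨h1, h2, h3⟩ := repOf_spec A₀ hτ
  have h4 := hrep _ hmem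
  rw [← h3]
  exact tleq_of_rfc A₀ h1 h4

open Classical in
noncomputable def topW (z : Set Formula) : Set Formula :=
  if hz : MCS z then (exists_topMCS A₀ hz).choose else z

lemma topW_spec {z : Set Formula} (hz : MCS z) :
    MCS (topW A₀ z) ∧ Rfc z (topW A₀ z) ∧
      ∀ τ ∈ Qset A₀ z, tleq τ (tyOf A₀ (topW A₀ z)) := by
  rw [topW, dif_pos hz]
  exact (exists_topMCS A₀ hz).choose_spec

open Classical in
noncomputable def glWitness (u : Set Formula) (B : Formula) : Set Formula :=
  if h : MCS u ∧ .boxp B ∉ u then (boxp_existence h.1 h.2).choose else u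

lemma glWitness_spec {u : Set Formula} {B : Formula} (hu : MCS u) (hB : .boxp B ∉ u) :
    MCS (glWitness u B) ∧ Rpc u (glWitness u B) ∧
      .boxp B ∈ glWitness u B ∧ .neg B ∈ glWitness u B := by
  rw [glWitness, dif_pos ⟨hu, hB⟩]
  exact (boxp_existence hu hB).choose_spec

variable (x₀ : Set Formula)

/-- nodes of the tree of clusters: paths of (type, formula) choices. -/
noncomputable def baseOf : List (Set Formula × Formula) → Set Formula
  | [] => x₀
  | (τ, B) :: p => glWitness (repOf A₀ (baseOf p) τ) B

def okNode : List (Set Formula × Formula) → Prop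
  | [] => True
  | (τ, B) :: p => okNode p ∧ τ ∈ Qset A₀ (baseOf A₀ x₀ p) ∧ .boxp B ∈ PhiS A₀ ∧
      .boxp B ∉ repOf A₀ (baseOf A₀ x₀ p) τ

variable {A₀ x₀}

lemma baseOf_mcs (hx₀ : MCS x₀) :
    ∀ {p : List (Set Formula × Formula)}, okNode A₀ x₀ p → MCS (baseOf A₀ x₀ p) := by
  intro p
  induction p with
  | nil => exact fun _ => hx₀
  | cons a p ih =>
    obtain ⟨τ, B⟩ := a
    rintro ⟨hok, hτ, hBΦ, hB⟩
    have hrep := repOf_spec A₀ hτ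
    exact (glWitness_spec hrep.1 (by rw [← hrep.2.2] at hB ⊢; exact hB)).1

/-- `□p`- and `□f`-persistence one step down the tree. -/
lemma boxp_step (hx₀ : MCS x₀) {τ : Set Formula} {B : Formula}
    {p : List (Set Formula × Formula)} (hok : okNode A₀ x₀ ((τ, B) :: p)) (C : Formula)
    (hC : .boxp C ∈ baseOf A₀ x₀ p) :
    .boxp C ∈ baseOf A₀ x₀ ((τ, B) :: p) ∧ .boxf C ∈ baseOf A₀ x₀ ((τ, B) :: p) := by
  obtain ⟨hokp, hτ, hBΦ, hB⟩ := hok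
  have hz := baseOf_mcs hx₀ hokp
  have hrep := repOf_spec A₀ hτ
  have h1 : .boxp C ∈ repOf A₀ (baseOf A₀ x₀ p) τ :=
    (rfc_boxp_iff hz hrep.1 hrep.2.1 C).1 hC
  have hgl := glWitness_spec hrep.1 (by rw [← hrep.2.2] at hB ⊢; exact hB)
  have h2 : .boxp (.boxf C) ∈ repOf A₀ (baseOf A₀ x₀ p) τ :=
    mcs_mp hrep.1 (PF.pf3 C) h1
  refine ⟨?_, ?_⟩
  · exact (hgl.2.1 C h1).2
  · exact (hgl.2.1 (.boxf C) h2).1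

lemma boxp_strict (hx₀ : MCS x₀) {τ : Set Formula} {B : Formula}
    {p : List (Set Formula × Formula)} (hok : okNode A₀ x₀ ((τ, B) :: p)) :
    .boxp B ∈ baseOf A₀ x₀ ((τ, B) :: p) ∧ .boxp B ∉ baseOf A₀ x₀ p := by
  obtain ⟨hokp, hτ, hBΦ, hB⟩ := hok
  have hz := baseOf_mcs hx₀ hokp
  have hrep := repOf_spec A₀ hτ
  have hgl := glWitness_spec hrep.1 (by rw [← hrep.2.2] at hB ⊢; exact hB)
  refine ⟨hgl.2.2.1, fun hmem => ?_⟩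
  exact hB ((rfc_boxp_iff hz hrep.1 hrep.2.1 B).1 hmem)

lemma boxp_desc (hx₀ : MCS x₀) {s p : List (Set Formula × Formula)}
    (hok : okNode A₀ x₀ (s ++ p)) (hs : s ≠ []) (C : Formula)
    (hC : .boxp C ∈ baseOf A₀ x₀ p) :
    .boxp C ∈ baseOf A₀ x₀ (s ++ p) ∧ .boxf C ∈ baseOf A₀ x₀ (s ++ p) := by
  induction s with
  | nil => exact absurd rfl hs
  | cons a s ih =>
    obtain ⟨τ, B⟩ := a
    by_cases hse : s = []
    · subst hse
      exact boxp_step hx₀ hok C hC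
    · have hok' : okNode A₀ x₀ (s ++ p) := hok.1
      have h1 := ih hok' hse
      exact boxp_step hx₀ hok (C := C) h1.1

lemma okNode_tail {a : Set Formula × Formula} {p : List (Set Formula × Formula)}
    (h : okNode A₀ x₀ (a :: p)) : okNode A₀ x₀ p := by
  obtain ⟨τ, B⟩ := a; exact h.1

/-! measure and length bound -/

open Classical in
noncomputable def msr (z : Set Formula) : ℕ :=
  ((phiS_finite A₀).toFinset.filter (fun C => (∃ B, C = .boxp B) ∧ C ∈ z)).card

lemma msr_le (z : Set Formula) : msr (A₀ := A₀) z ≤ (phiS_finite A₀).toFinset.card := by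
  classical
  exact Finset.card_le_card (Finset.filter_subset _ _)

lemma msr_step (hx₀ : MCS x₀) {τ : Set Formula} {B : Formula}
    {p : List (Set Formula × Formula)} (hok : okNode A₀ x₀ ((τ, B) :: p)) :
    msr (A₀ := A₀) (baseOf A₀ x₀ p) < msr (A₀ := A₀) (baseOf A₀ x₀ ((τ, B) :: p)) := by
  classical
  apply Finset.card_lt_card
  rw [Finset.ssubset_iff_of_subset]
  · refine ⟨.boxp B, ?_, ?_⟩
    · simp only [Finset.mem_filter, Set.Finite.mem_toFinset]
      exact ⟨hok.2.2.1, ⟨B, rfl⟩, (boxp_strict hx₀ hok).1⟩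
    · simp only [Finset.mem_filter, Set.Finite.mem_toFinset]
      intro ⟨_, _, hmem⟩
      exact (boxp_strict hx₀ hok).2 hmem
  · intro C hC
    simp only [Finset.mem_filter, Set.Finite.mem_toFinset] at hC ⊢
    obtain ⟨hΦ, ⟨D, rfl⟩, hz⟩ := hC
    exact ⟨hΦ, ⟨D, rfl⟩, (boxp_step hx₀ hok D hz).1⟩

lemma length_bound (hx₀ : MCS x₀) :
    ∀ {p : List (Set Formula × Formula)}, okNode A₀ x₀ p →
      p.length + msr (A₀ := A₀) x₀ ≤ msr (A₀ := A₀) (baseOf A₀ x₀ p) := by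
  intro p
  induction p with
  | nil => exact fun _ => by simp [baseOf]
  | cons a p ih =>
    obtain ⟨τ, B⟩ := a
    intro hok
    have h1 := ih (okNode_tail hok)
    have h2 := msr_step hx₀ hok
    simp only [List.length_cons]
    omega

lemma length_le (hx₀ : MCS x₀) {p : List (Set Formula × Formula)}
    (hok : okNode A₀ x₀ p) : p.length ≤ (phiS_finite A₀).toFinset.card := by
  have h1 := length_bound hx₀ hok
  have h2 := msr_le (A₀ := A₀) (baseOf A₀ x₀ p)
  omega

lemma finite_lists {α : Type*} {s : Set α} (hs : s.Finite) :
    ∀ n : ℕ, {l : List α | l.length ≤ n ∧ ∀ x ∈ l, x ∈ s}.Finite := by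
  intro n
  induction n with
  | zero =>
    apply Set.Finite.subset (Set.finite_singleton ([] : List α))
    rintro l ⟨h1, _⟩
    simp only [Nat.le_zero, List.length_eq_zero_iff] at h1
    simp [h1]
  | succ n ih =>
    apply Set.Finite.subset (Set.Finite.insert ([] : List α) (Set.Finite.image2 List.cons hs ih))
    rintro l ⟨h1, h2⟩
    cases l with
    | nil => exact Set.mem_insert _ _
    | cons a t =>
      refine Set.mem_insert_of_mem _ (Set.mem_image2_of_mem (h2 a (by simp)) ?_)
      refine ⟨by simp only [List.length_cons] at h1; omega, ?_⟩
      intro x hx; exact h2 x (List.mem_cons_of_mem _ hx)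

lemma okNode_entries {p : List (Set Formula × Formula)} (hok : okNode A₀ x₀ p) :
    ∀ e ∈ p, e.1 ⊆ PhiS A₀ ∧ .boxp e.2 ∈ PhiS A₀ := by
  induction p with
  | nil => simp
  | cons a p ih =>
    intro e he
    rcases List.mem_cons.1 he with rfl | he
    · obtain ⟨τ, B⟩ := e
      obtain ⟨_, hτ, hB, _⟩ := hok
      refine ⟨?_, hB⟩
      obtain ⟨u, _, _, rfl⟩ := hτ
      intro C hC; exact hC.1
    · exact ih (okNode_tail hok) e he

lemma okNode_finite (hx₀ : MCS x₀) : {p : List (Set Formula × Formula) | okNode A₀ x₀ p}.Finite := by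
  have hE : ({e : Set Formula × Formula |
      e.1 ⊆ PhiS A₀ ∧ .boxp e.2 ∈ PhiS A₀}).Finite := by
    have h1 : ({τ : Set Formula | τ ⊆ PhiS A₀}).Finite := (phiS_finite A₀).finite_subsets
    have h2 : ({B : Formula | .boxp B ∈ PhiS A₀}).Finite := by
      have hinj : Function.Injective Formula.boxp := by
        intro a b h; cases h; rfl
      exact Set.Finite.preimage hinj.injOn (phiS_finite A₀)
    exact (h1.prod h2).subset (fun e he => Set.mk_mem_prod he.1 he.2)
  apply Set.Finite.subset (finite_lists hE ((phiS_finite A₀).toFinset.card))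
  intro p hp
  exact ⟨length_le hx₀ hp, okNode_entries hp⟩

end Model2


/-! ### Generic soundness over the frame conditions -/

lemma soundness_frame {W : Type} (R S : W → W → Prop)
    (hRtrans : Transitive R) (hRwf : WellFounded (flip R))
    (hSrefl : Reflexive S) (hStrans : Transitive S)
    (hconf : ∀ x y z, S x y → S x z → ∃ w, S y w ∧ S z w)
    (hRS1 : ∀ x y z, S x y → R y z → R x z)
    (hRS2 : ∀ x y z, S x y → R x z → R y z)
    (hRS3 : ∀ x y z, R x y → S y z → R x z) :
    ∀ A, PF A → ValidOn R S A := by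
  intro A hA
  induction hA with
  | @taut A h =>
    intro V w
    classical
    have hf := h (fun B => decide (Sat R S V w B)) ?_ ?_ ?_ ?_
    · exact of_decide_eq_true hf
    · intro B; by_cases hB : Sat R S V w B <;> simp [Sat, hB]
    · intro B C; by_cases hB : Sat R S V w B <;> by_cases hC : Sat R S V w C <;>
        simp [Sat, hB, hC]
    · intro B C; by_cases hB : Sat R S V w B <;> by_cases hC : Sat R S V w C <;>
        simp [Sat, hB, hC]
    · intro B C; by_cases hB : Sat R S V w B <;> by_cases hC : Sat R S V w C <;>
        simp [Sat, hB, hC]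
  | kp A B =>
    intro V w
    intro h1 h2 v hv
    exact h1 v hv (h2 v hv)
  | lob A =>
    intro V w
    intro h
    have main : ∀ v, R w v → Sat R S V v A := by
      intro v
      induction v using hRwf.induction with
      | _ v ih =>
        intro hv
        refine h v hv ?_
        intro u hu
        exact ih u hu (hRtrans hv hu)
    exact main
  | kf A B =>
    intro V w h1 h2 v hv
    exact h1 v hv (h2 v hv)
  | tf A =>
    intro V w h
    exact h w (hSrefl w)
  | fourf A =>
    intro V w h v hv u hu
    exact h u (hStrans hv hu)
  | dot2f A =>
    intro V w
    show ¬ (∀ v, S w v → ¬ _) → _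
    intro h v hv
    show ¬ (∀ u, S v u → ¬ _)
    intro hall
    apply h
    intro y hy hbox
    obtain ⟨u, hyu, hvu⟩ := hconf w y v hy hv
    exact hall u hvu (hbox u hyu)
  | pf1 A =>
    intro V w h v hSwv u hRvu
    exact h u (hRS1 w v u hSwv hRvu)
  | pf2 A =>
    intro V w
    show ¬ _ → _
    intro h v hSwv
    show ¬ _
    intro hall
    apply h
    intro u hRwu
    exact hall u (hRS2 w v u hSwv hRwu)
  | pf3 A =>
    intro V w h v hRwv u hSvu
    exact h u (hRS3 w v u hRwv hSvu)
  | mp _ _ ih1 ih2 =>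
    intro V w
    exact ih1 V w (ih2 V w)
  | necp _ ih =>
    intro V w v _
    exact ih V v
  | necf _ ih =>
    intro V w v _
    exact ih V v

/-! ### The finite model -/

section Model3

variable (A₀ : Formula) (x₀ : Set Formula)

def okW (w : List (Set Formula × Formula) × Set (Set Formula) × Set Formula) : Prop :=
  okNode A₀ x₀ w.1 ∧ w.2.1 ⊆ Qset A₀ (baseOf A₀ x₀ w.1) ∧
    w.2.2 ∈ Qset A₀ (baseOf A₀ x₀ w.1) ∧
    Val (tyOf A₀ (baseOf A₀ x₀ w.1)) (tyOf A₀ (topW A₀ (baseOf A₀ x₀ w.1))) w.2.1 w.2.2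

def Wld := {w : List (Set Formula × Formula) × Set (Set Formula) × Set Formula //
  okW A₀ x₀ w}

def Srel (w w' : Wld A₀ x₀) : Prop := w.1.1 = w'.1.1 ∧ w.1.2.1 ⊆ w'.1.2.1

def Rrel (w w' : Wld A₀ x₀) : Prop := ∃ s, s ≠ [] ∧ w'.1.1 = s ++ w.1.1

def Vval (w : Wld A₀ x₀) (n : ℕ) : Prop := .var n ∈ w.1.2.2

variable {A₀ x₀}

lemma rho_mem {z : Set Formula} (hz : MCS z) : tyOf A₀ z ∈ Qset A₀ z :=
  ⟨z, hz, rfc_refl hz, rfl⟩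

lemma rho_root {z : Set Formula} (hz : MCS z) :
    ∀ σ ∈ Qset A₀ z, tleq (tyOf A₀ z) σ := by
  rintro σ ⟨u, hu, hzu, rfl⟩
  exact tleq_of_rfc A₀ hz hzu

lemma theta_mem {z : Set Formula} (hz : MCS z) : tyOf A₀ (topW A₀ z) ∈ Qset A₀ z :=
  ⟨_, (topW_spec A₀ hz).1, (topW_spec A₀ hz).2.1, rfl⟩

lemma theta_top {z : Set Formula} (hz : MCS z) :
    ∀ σ ∈ Qset A₀ z, tleq σ (tyOf A₀ (topW A₀ z)) := (topW_spec A₀ hz).2.2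

/-- the bottom world of the cluster of a node. -/
noncomputable def botW (hx₀ : MCS x₀) {p : List (Set Formula × Formula)}
    (hok : okNode A₀ x₀ p) : Wld A₀ x₀ :=
  ⟨(p, ∅, tyOf A₀ (baseOf A₀ x₀ p)),
    hok, by simp, rho_mem (baseOf_mcs hx₀ hok),
    Or.inl ⟨rfl, qset_refl A₀ (rho_mem (baseOf_mcs hx₀ hok)),
      qset_refl A₀ (rho_mem (baseOf_mcs hx₀ hok))⟩⟩

lemma exists_wld (hx₀ : MCS x₀) {p : List (Set Formula × Formula)}
    (hok : okNode A₀ x₀ p) {a : Set (Set Formula)}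
    (ha : a ⊆ Qset A₀ (baseOf A₀ x₀ p)) :
    ∃ τ ∈ Qset A₀ (baseOf A₀ x₀ p), okW A₀ x₀ (p, a, τ) := by
  have hz := baseOf_mcs hx₀ hok
  obtain ⟨τ, hτQ, hval⟩ := val_nonempty (qset_finite A₀ _) (fun τ h => qset_refl A₀ h)
    (rho_mem hz) (rho_root hz) (theta_mem hz) (theta_top hz) ha
  exact ⟨τ, hτQ, hok, ha, hτQ, hval⟩

lemma cluster_char (hx₀ : MCS x₀) (x : Wld A₀ x₀) :
    cluster (Srel A₀ x₀) x = {y | y.1.1 = x.1.1} := by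
  ext y
  constructor
  · intro hy
    induction hy with
    | single h => rcases h with h | h
                  · exact h.1.symm
                  · exact h.1
    | tail _ h2 ih =>
      rcases h2 with h | h
      · exact h.1.symm.trans ih
      · exact h.1.trans ih
  · intro hy
    have h1 : SymCl (Srel A₀ x₀) x (botW hx₀ x.2.1) :=
      Or.inr ⟨rfl, by intro t ht; exact absurd ht (Set.notMem_empty t)⟩
    have h2 : SymCl (Srel A₀ x₀) (botW hx₀ x.2.1) y :=
      Or.inl ⟨hy.symm, by intro t ht; exact absurd ht (Set.notMem_empty t)⟩
    exact Relation.TransGen.tail (Relation.TransGen.single h1) h2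

lemma wld_finite (hx₀ : MCS x₀) : Finite (Wld A₀ x₀) := by
  have hT : ({τ : Set Formula | τ ⊆ PhiS A₀}).Finite := (phiS_finite A₀).finite_subsets
  have hA : ({a : Set (Set Formula) | a ⊆ {τ | τ ⊆ PhiS A₀}}).Finite := hT.finite_subsets
  have hP := okNode_finite (A₀ := A₀) hx₀
  have hbig : ({w : List (Set Formula × Formula) × Set (Set Formula) × Set Formula |
      okW A₀ x₀ w}).Finite := by
    apply Set.Finite.subset ((hP.prod (hA.prod hT)))
    rintro ⟨p, a, τ⟩ ⟨hok, ha, hτ, _⟩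
    refine Set.mk_mem_prod hok (Set.mk_mem_prod ?_ ?_)
    · intro σ hσ
      obtain ⟨u, _, _, rfl⟩ := ha hσ
      intro C hC; exact hC.1
    · obtain ⟨u, _, _, rfl⟩ := hτ
      intro C hC; exact hC.1
  exact hbig.to_subtype

lemma rrel_trans : Transitive (Rrel A₀ x₀) := by
  rintro x y z ⟨s, hs, hy⟩ ⟨t, ht, hz⟩
  exact ⟨t ++ s, by simp [hs], by rw [hz, hy, List.append_assoc]⟩

lemma rrel_irrefl (x : Wld A₀ x₀) : ¬ Rrel A₀ x₀ x x := by
  rintro ⟨s, hs, hx⟩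
  have := congrArg List.length hx
  simp at this
  exact hs this

lemma srel_refl : Reflexive (Srel A₀ x₀) := fun x => ⟨rfl, subset_rfl⟩

lemma srel_trans : Transitive (Srel A₀ x₀) := by
  rintro x y z ⟨h1, h2⟩ ⟨h3, h4⟩
  exact ⟨h1.trans h3, h2.trans h4⟩

lemma srel_conf (hx₀ : MCS x₀) (x y z : Wld A₀ x₀) (h1 : Srel A₀ x₀ x y)
    (h2 : Srel A₀ x₀ x z) : ∃ w, Srel A₀ x₀ y w ∧ Srel A₀ x₀ z w := by
  have hok : okNode A₀ x₀ x.1.1 := x.2.1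
  have hab : y.1.2.1 ∪ z.1.2.1 ⊆ Qset A₀ (baseOf A₀ x₀ x.1.1) := by
    intro τ hτ
    rcases hτ with hτ | hτ
    · have := y.2.2.1 hτ; rwa [← h1.1] at this
    · have := z.2.2.1 hτ; rwa [← h2.1] at this
  obtain ⟨τ, hτQ, hw⟩ := exists_wld hx₀ hok hab
  refine ⟨⟨(x.1.1, y.1.2.1 ∪ z.1.2.1, τ), hw⟩, ⟨h1.1.symm, ?_⟩, ⟨h2.1.symm, ?_⟩⟩
  · exact Set.subset_union_left
  · exact Set.subset_union_right

lemma rs1 (x y z : Wld A₀ x₀) (h1 : Srel A₀ x₀ x y) (h2 : Rrel A₀ x₀ y z) :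
    Rrel A₀ x₀ x z := by
  obtain ⟨s, hs, hz⟩ := h2
  exact ⟨s, hs, by rw [hz, ← h1.1]⟩

lemma rs2 (x y z : Wld A₀ x₀) (h1 : Srel A₀ x₀ x y) (h2 : Rrel A₀ x₀ x z) :
    Rrel A₀ x₀ y z := by
  obtain ⟨s, hs, hz⟩ := h2
  exact ⟨s, hs, by rw [hz, h1.1]⟩

lemma rs3 (x y z : Wld A₀ x₀) (h1 : Rrel A₀ x₀ x y) (h2 : Srel A₀ x₀ y z) :
    Rrel A₀ x₀ x z := by
  obtain ⟨s, hs, hy⟩ := h1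
  exact ⟨s, hs, by rw [← h2.1, hy]⟩

lemma model_isPFFrame (hx₀ : MCS x₀) : IsPFFrame (Rrel A₀ x₀) (Srel A₀ x₀) := by
  intro A hA
  have := wld_finite (A₀ := A₀) hx₀
  haveI : IsTrans (Wld A₀ x₀) (flip (Rrel A₀ x₀)) :=
    ⟨fun a b c h1 h2 => rrel_trans h2 h1⟩
  haveI : IsIrrefl (Wld A₀ x₀) (flip (Rrel A₀ x₀)) := ⟨fun a => rrel_irrefl a⟩
  exact soundness_frame _ _ rrel_trans (Finite.wellFounded_of_trans_of_irrefl _)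
    srel_refl srel_trans (srel_conf hx₀) (rs1) (rs2) (rs3) A hA

end Model3


section Truth

variable {A₀ : Formula} {x₀ : Set Formula}

lemma ty_mem_iff {u : Set Formula} {B : Formula} (hB : B ∈ PhiS A₀) :
    B ∈ tyOf A₀ u ↔ B ∈ u := ⟨fun h => h.2, fun h => ⟨hB, h⟩⟩

lemma truth_lemma (hx₀ : MCS x₀) :
    ∀ (B : Formula), B ∈ PhiS A₀ → ∀ w : Wld A₀ x₀,
      Sat (Rrel A₀ x₀) (Srel A₀ x₀) (Vval A₀ x₀) w B ↔ B ∈ w.1.2.2 := by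
  intro B
  induction B with
  | var n => intro _ w; exact Iff.rfl
  | neg B ih =>
    intro hΦ w
    obtain ⟨u, hu, hzu, hty⟩ := w.2.2.2.1
    have hBΦ := phiS_neg A₀ hΦ
    show (¬ Sat _ _ _ w B) ↔ _
    rw [ih hBΦ w, hty, ty_mem_iff hΦ, ty_mem_iff hBΦ]
    exact (mcs_neg hu).symm
  | and B C ihB ihC =>
    intro hΦ w
    obtain ⟨u, hu, hzu, hty⟩ := w.2.2.2.1
    have hBΦ := (phiS_and A₀ hΦ).1
    have hCΦ := (phiS_and A₀ hΦ).2
    show (Sat _ _ _ w B ∧ Sat _ _ _ w C) ↔ _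
    rw [ihB hBΦ w, ihC hCΦ w, hty, ty_mem_iff hΦ, ty_mem_iff hBΦ, ty_mem_iff hCΦ]
    exact (mcs_and hu).symm
  | or B C ihB ihC =>
    intro hΦ w
    obtain ⟨u, hu, hzu, hty⟩ := w.2.2.2.1
    have hBΦ := (phiS_or A₀ hΦ).1
    have hCΦ := (phiS_or A₀ hΦ).2
    show (Sat _ _ _ w B ∨ Sat _ _ _ w C) ↔ _
    rw [ihB hBΦ w, ihC hCΦ w, hty, ty_mem_iff hΦ, ty_mem_iff hBΦ, ty_mem_iff hCΦ]
    exact (mcs_or hu).symm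
  | imp B C ihB ihC =>
    intro hΦ w
    obtain ⟨u, hu, hzu, hty⟩ := w.2.2.2.1
    have hBΦ := (phiS_imp A₀ hΦ).1
    have hCΦ := (phiS_imp A₀ hΦ).2
    show ((Sat _ _ _ w B) → (Sat _ _ _ w C)) ↔ _
    rw [ihB hBΦ w, ihC hCΦ w, hty, ty_mem_iff hΦ, ty_mem_iff hBΦ, ty_mem_iff hCΦ]
    exact (mcs_imp hu).symm
  | boxp B ih =>
    intro hΦ w
    obtain ⟨u, hu, hzu, hty⟩ := w.2.2.2.1
    have hz : MCS (baseOf A₀ x₀ w.1.1) := baseOf_mcs hx₀ w.2.1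
    have hBΦ := phiS_boxp A₀ hΦ
    constructor
    · intro hsat
      by_contra hmem
      have hnotu : .boxp B ∉ u := fun h => hmem (by rw [hty]; exact (ty_mem_iff hΦ).2 h)
      have hτQ := w.2.2.2.1
      have hrep := repOf_spec A₀ hτQ
      have hnotrep : .boxp B ∉ repOf A₀ (baseOf A₀ x₀ w.1.1) w.1.2.2 := by
        intro hmem'
        apply hmem
        rw [← hrep.2.2]
        exact (ty_mem_iff hΦ).2 hmem'
      have hok' : okNode A₀ x₀ ((w.1.2.2, B) :: w.1.1) := ⟨w.2.1, hτQ, hΦ, hnotrep⟩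
      have hR : Rrel A₀ x₀ w (botW hx₀ hok') := ⟨[(w.1.2.2, B)], by simp, rfl⟩
      have hsat' := hsat (botW hx₀ hok') hR
      have hmem' := (ih hBΦ (botW hx₀ hok')).1 hsat'
      have hbase : B ∈ baseOf A₀ x₀ ((w.1.2.2, B) :: w.1.1) := (ty_mem_iff hBΦ).1 hmem'
      have hgl := glWitness_spec hrep.1 (by rw [← hrep.2.2] at hnotrep ⊢; exact hnotrep)
      have hnegB : .neg B ∈ baseOf A₀ x₀ ((w.1.2.2, B) :: w.1.1) := hgl.2.2.2
      exact (mcs_neg (baseOf_mcs hx₀ hok')).1 hnegB hbase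
    · intro hmem v hv
      obtain ⟨s, hs, hpath⟩ := hv
      have hboxu : .boxp B ∈ u := by rw [hty] at hmem; exact (ty_mem_iff hΦ).1 hmem
      have hboxz : .boxp B ∈ baseOf A₀ x₀ w.1.1 := (rfc_boxp_iff hz hu hzu B).2 hboxu
      have hokv : okNode A₀ x₀ (s ++ w.1.1) := by rw [← hpath]; exact v.2.1
      have hdesc := boxp_desc hx₀ hokv hs B hboxz
      obtain ⟨u', hu', hzu', hty'⟩ := v.2.2.2.1
      have hboxf : .boxf B ∈ baseOf A₀ x₀ v.1.1 := by rw [hpath]; exact hdesc.2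
      have hBu' : B ∈ u' := hzu' B hboxf
      refine (ih hBΦ v).2 ?_
      rw [hty']
      exact (ty_mem_iff hBΦ).2 hBu'
  | boxf B ih =>
    intro hΦ w
    obtain ⟨u, hu, hzu, hty⟩ := w.2.2.2.1
    have hz : MCS (baseOf A₀ x₀ w.1.1) := baseOf_mcs hx₀ w.2.1
    have hBΦ := phiS_boxf A₀ hΦ
    constructor
    · intro hsat
      by_contra hmem
      have hnotu : .boxf B ∉ u := fun h => hmem (by rw [hty]; exact (ty_mem_iff hΦ).2 h)
      obtain ⟨v, hv, hvRfc, hnegB⟩ := boxf_existence hu hnotu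
      have hσQ : tyOf A₀ v ∈ Qset A₀ (baseOf A₀ x₀ w.1.1) :=
        ⟨v, hv, rfc_trans hz hzu hvRfc, rfl⟩
      have hle : tleq w.1.2.2 (tyOf A₀ v) := by
        rw [hty]; exact tleq_of_rfc A₀ hu hvRfc
      have hval' := val_back (Q := Qset A₀ (baseOf A₀ x₀ w.1.1))
        (fun τ h => qset_refl A₀ h) (theta_top hz) w.2.2.1 hσQ w.2.2.2.2 hle
      have hsub' : w.1.2.1 ∪ {tyOf A₀ v} ⊆ Qset A₀ (baseOf A₀ x₀ w.1.1) := by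
        intro τ hτ
        rcases hτ with hτ | hτ
        · exact w.2.2.1 hτ
        · rw [Set.mem_singleton_iff] at hτ; rw [hτ]; exact hσQ
      have hw' : okW A₀ x₀ (w.1.1, w.1.2.1 ∪ {tyOf A₀ v}, tyOf A₀ v) :=
        ⟨w.2.1, hsub', hσQ, hval'⟩
      have hS : Srel A₀ x₀ w ⟨_, hw'⟩ := ⟨rfl, Set.subset_union_left⟩
      have hsat' := hsat ⟨_, hw'⟩ hS
      have hmem' := (ih hBΦ ⟨_, hw'⟩).1 hsat'
      have hBv : B ∈ v := (ty_mem_iff hBΦ).1 hmem'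
      exact (mcs_neg hv).1 hnegB hBv
    · intro hmem w' hS
      obtain ⟨hpath, hsub⟩ := hS
      obtain ⟨hok', hsub', hmem', hval'⟩ := w'.2
      rw [show w'.1.1 = w.1.1 from hpath.symm] at hsub' hmem' hval'
      have hle : tleq w.1.2.2 w'.1.2.2 :=
        val_mono (Q := Qset A₀ (baseOf A₀ x₀ w.1.1)) (fun τ h => qset_refl A₀ h)
          (rho_mem hz) (rho_root hz) (theta_mem hz) (theta_top hz)
          w.2.2.1 hsub' hsub w.2.2.2.1 hmem' w.2.2.2.2 hval'
      have hBσ : B ∈ w'.1.2.2 := (hle B hmem).2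
      exact (ih hBΦ w').2 hBσ

end Truth

lemma ded_empty {B : Formula} (h : Ded ∅ B) : PF B := by
  obtain ⟨L, hL, hp⟩ := h.toImpList
  cases L with
  | nil => exact hp
  | cons C L => exact absurd (hL C (by simp)) (Set.notMem_empty C)

lemma model_nice {A₀ : Formula} {x₀ : Set Formula} : Nice (Rrel A₀ x₀) (Srel A₀ x₀) := by
  intro x y z hR hS
  obtain ⟨s, hs, hz⟩ := hR
  exact ⟨s, hs, hS.1.trans hz⟩

lemma okNode_nil {A₀ : Formula} {x₀ : Set Formula} : okNode A₀ x₀ [] := trivial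

lemma botW_path {A₀ : Formula} {x₀ : Set Formula} (hx₀ : MCS x₀)
    {p : List (Set Formula × Formula)} (hok : okNode A₀ x₀ p) :
    (botW hx₀ hok).1.1 = p := rfl

lemma botW_ty {A₀ : Formula} {x₀ : Set Formula} (hx₀ : MCS x₀)
    {p : List (Set Formula × Formula)} (hok : okNode A₀ x₀ p) :
    (botW hx₀ hok).1.2.2 = tyOf A₀ (baseOf A₀ x₀ p) := rfl

lemma baseOf_nil {A₀ : Formula} {x₀ : Set Formula} : baseOf A₀ x₀ [] = x₀ := rfl

lemma bot_srel {A₀ : Formula} {x₀ : Set Formula} (hx₀ : MCS x₀)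
    {p : List (Set Formula × Formula)} (hok : okNode A₀ x₀ p) (z : Wld A₀ x₀)
    (hz : z.1.1 = p) : Srel A₀ x₀ (botW hx₀ hok) z :=
  ⟨(botW_path hx₀ hok).trans hz.symm, Set.empty_subset _⟩

lemma model_root_cond1 {A₀ : Formula} {x₀ : Set Formula} (hx₀ : MCS x₀) :
    ∀ x : Wld A₀ x₀, cluster (Srel A₀ x₀) (botW hx₀ (okNode_nil (A₀ := A₀) (x₀ := x₀))) =
      cluster (Srel A₀ x₀) x ∨
      Rrel A₀ x₀ (botW hx₀ (okNode_nil (A₀ := A₀) (x₀ := x₀))) x := by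
  intro x
  by_cases hx : x.1.1 = ([] : List (Set Formula × Formula))
  · left
    rw [cluster_char hx₀, cluster_char hx₀, botW_path, hx]
  · right
    exact ⟨x.1.1, hx, by rw [botW_path]; simp⟩

lemma model_root_cond2 {A₀ : Formula} {x₀ : Set Formula} (hx₀ : MCS x₀) (x : Wld A₀ x₀) :
    ∀ z ∈ cluster (Srel A₀ x₀) x, Srel A₀ x₀ (botW hx₀ x.2.1) z := by
  intro z hz
  rw [cluster_char hx₀] at hz
  exact bot_srel hx₀ x.2.1 z hz

lemma model_rooted {A₀ : Formula} {x₀ : Set Formula} (hx₀ : MCS x₀) :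
    Rooted (Rrel A₀ x₀) (Srel A₀ x₀) := by
  constructor
  · exact ⟨botW hx₀ okNode_nil, model_root_cond1 hx₀⟩
  · intro x
    refine ⟨botW hx₀ x.2.1, ?_, model_root_cond2 hx₀ x⟩
    rw [cluster_char hx₀]
    exact botW_path hx₀ x.2.1

lemma model_pba {A₀ : Formula} {x₀ : Set Formula} (hx₀ : MCS x₀) (x : Wld A₀ x₀) :
    ClusterPBA (Srel A₀ x₀) x := by
  classical
  refine ⟨Set {τ // τ ∈ Qset A₀ (baseOf A₀ x₀ x.1.1)}, inferInstance,
    fun y => {t | t.1 ∈ y.1.1.2.1}, ?_, ?_⟩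
  · intro s
    have ha : {τ | ∃ h : τ ∈ Qset A₀ (baseOf A₀ x₀ x.1.1),
        (⟨τ, h⟩ : {τ // τ ∈ Qset A₀ (baseOf A₀ x₀ x.1.1)}) ∈ s}
        ⊆ Qset A₀ (baseOf A₀ x₀ x.1.1) := fun τ hτ => hτ.1
    obtain ⟨τ, hτQ, hw⟩ := exists_wld hx₀ x.2.1 ha
    have hclu : (⟨(x.1.1, _, τ), hw⟩ : Wld A₀ x₀) ∈ cluster (Srel A₀ x₀) x := by
      rw [cluster_char hx₀]; exact rfl
    refine ⟨⟨_, hclu⟩, ?_⟩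
    ext t
    simp only [Set.mem_setOf_eq]
    constructor
    · intro ht
      obtain ⟨h, hs⟩ := ht
      have heq : (⟨t.1, h⟩ : {τ // τ ∈ Qset A₀ (baseOf A₀ x₀ x.1.1)}) = t := Subtype.ext rfl
      rwa [heq] at hs
    · intro hs
      exact ⟨t.2, by
        rwa [show (⟨t.1, t.2⟩ : {τ // τ ∈ Qset A₀ (baseOf A₀ x₀ x.1.1)}) = t
          from Subtype.ext rfl]⟩
  · intro a b
    constructor
    · intro h t ht
      exact h.2 ht
    · intro h
      have hpa : a.1.1.1 = x.1.1 := by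
        have h' : a.1 ∈ {y : Wld A₀ x₀ | y.1.1 = x.1.1} := by
          rw [← cluster_char hx₀]; exact a.2
        exact h'
      have hpb : b.1.1.1 = x.1.1 := by
        have h' : b.1 ∈ {y : Wld A₀ x₀ | y.1.1 = x.1.1} := by
          rw [← cluster_char hx₀]; exact b.2
        exact h'
      refine ⟨hpa.trans hpb.symm, ?_⟩
      intro τ hτ
      have hτQ : τ ∈ Qset A₀ (baseOf A₀ x₀ x.1.1) := by
        have h1 := a.1.2.2.1 hτ
        rwa [hpa] at h1
      have h2 : (⟨τ, hτQ⟩ : {τ // τ ∈ Qset A₀ (baseOf A₀ x₀ x.1.1)}) ∈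
          {t | t.1 ∈ a.1.1.2.1} := hτ
      exact h h2

lemma completeness (A : Formula)
    (h4 : ∀ (W : Type) (R S : W → W → Prop), Nonempty W → Finite W → IsPFFrame R S →
       Nice R S → Rooted R S → (∀ x : W, ClusterPBA S x) →
       ∀ (V : W → ℕ → Prop) (r : W),
         (∀ x : W, cluster S r = cluster S x ∨ R r x) →
         (∀ z ∈ cluster S r, S r z) →
         Sat R S V r A) : PF A := by
  by_contra hA
  have hcon : Con {Formula.neg A} := by
    intro hded
    have h0 : Ded (insert (Formula.neg A) ∅) Bot := by
      refine hded.mono ?_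
      intro C hC
      rw [Set.mem_singleton_iff] at hC
      exact Or.inl hC
    have h1 : Ded ∅ (.imp (.neg A) Bot) := deduction h0
    exact hA (PF.mp (pfDNE A) (ded_empty h1))
  obtain ⟨x₀, hsub, hx₀⟩ := lindenbaum hcon
  have hnegA : .neg A ∈ x₀ := hsub rfl
  have hfin := wld_finite (A₀ := A) (x₀ := x₀) hx₀
  have hcond2 : ∀ z ∈ cluster (Srel A x₀) (botW hx₀ (okNode_nil (A₀ := A) (x₀ := x₀))),
      Srel A x₀ (botW hx₀ (okNode_nil (A₀ := A) (x₀ := x₀))) z := by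
    intro z hz
    rw [cluster_char hx₀] at hz
    exact bot_srel hx₀ okNode_nil z (hz.trans (botW_path hx₀ okNode_nil))
  have hsat := h4 (Wld A x₀) (Rrel A x₀) (Srel A x₀)
    ⟨botW hx₀ (okNode_nil (A₀ := A) (x₀ := x₀))⟩ hfin
    (model_isPFFrame hx₀) model_nice (model_rooted hx₀) (model_pba hx₀)
    (Vval A x₀) (botW hx₀ okNode_nil) (model_root_cond1 hx₀) hcond2
  have hAmem := (truth_lemma hx₀ A (self_mem_subf A) (botW hx₀ okNode_nil)).1 hsat
  rw [botW_ty hx₀ okNode_nil, baseOf_nil] at hAmem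
  have hAx₀ : A ∈ x₀ := (ty_mem_iff (self_mem_subf A)).1 hAmem
  exact (mcs_neg hx₀).1 hnegA hAx₀

theorem statement_7 (A : Formula) :
    [PF A,
     ∀ (W : Type) (R S : W → W → Prop), Nonempty W → IsPFFrame R S → ValidOn R S A,
     ∀ (W : Type) (R S : W → W → Prop), Nonempty W → Finite W → IsPFFrame R S →
       Nice R S → Rooted R S → (∀ x : W, ClusterPBA S x) → ValidOn R S A,
     ∀ (W : Type) (R S : W → W → Prop), Nonempty W → Finite W → IsPFFrame R S →
       Nice R S → Rooted R S → (∀ x : W, ClusterPBA S x) →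
       ∀ (V : W → ℕ → Prop) (r : W),
         (∀ x : W, cluster S r = cluster S x ∨ R r x) →
         (∀ z ∈ cluster S r, S r z) →
         Sat R S V r A].TFAE := by
  tfae_have 1 → 2 := by
    intro h W R S _ hF
    exact hF A h
  tfae_have 2 → 3 := by
    intro h W R S hne _ hF _ _ _
    exact h W R S hne hF
  tfae_have 3 → 4 := by
    intro h W R S hne hfin hF hn hr hp V r _ _
    exact h W R S hne hfin hF hn hr hp V r
  tfae_have 4 → 1 := completeness A
  tfae_finish

end PFPaper
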